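/- arXiv:1310.5011 — 8 statements merged into one kernel-verified Lean document; each statement's English description precedes it below -/
import Mathlib

section
/- There exists a meadow M of characteristic 0 that is not a cancellation meadow and does not contain the zero-totalized field of rational numbers as a subalgebra; concretely, there exists a meadow M of characteristic 0 containing an element a such that a ≠ 0, 2 ≠ 0 and 2·a = 0 hold in M (so M has proper zero divisors), and moreover 2·2⁻¹ ≠ 1 holds in M. -/
/-- A meadow: a commutative ring with a total inverse operation satisfying
`(x⁻¹)⁻¹ = x` and the restricted inverse law `x * (x * x⁻¹) = x`. -/
class Meadow (M : Type) extends CommRing M, Inv M where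
  minv_inv : ∀ x : M, x⁻¹⁻¹ = x
  ril : ∀ x : M, x * (x * x⁻¹) = x

lemma ril_aux {K : Type} [GroupWithZero K] (z : K) : z * (z * z⁻¹) = z := by
  rcases eq_or_ne z 0 with h | h
  · simp [h]
  · simp [mul_inv_cancel₀ h]

noncomputable instance : Meadow (ℚ × ZMod 2) where
  minv_inv := fun x => Prod.ext (inv_inv x.1) (inv_inv x.2)
  ril := fun x => Prod.ext (ril_aux x.1) (ril_aux x.2)

/-- there is a meadow of characteristic 0 (all numerals `n ≥ 1` are nonzero)
that is not a cancellation meadow, witnessed by an element `a ≠ 0` with `2 ≠ 0` and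
`2 * a = 0`, and in which moreover `2 * 2⁻¹ ≠ 1` (so it does not contain `ℚ₀`). -/
theorem exists_noncancellation_meadow_char_zero :
    ∃ (M : Type) (_ : Meadow M),
      (∀ n : ℕ, 0 < n → (n : M) ≠ 0) ∧
      ¬ (∀ x : M, x ≠ 0 → x * x⁻¹ = 1) ∧
      ∃ a : M, a ≠ 0 ∧ (2 : M) ≠ 0 ∧ 2 * a = 0 ∧ (2 : M) * (2 : M)⁻¹ ≠ 1 := by
  refine ⟨ℚ × ZMod 2, inferInstance, ?_, ?_, (0, 1), ?_, ?_, ?_, ?_⟩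
  · intro n hn h
    have := congrArg Prod.fst h
    simp at this
    omega
  · intro h
    have := h (0, 1) (by simp [Prod.ext_iff])
    simp [Prod.ext_iff] at this
  · simp [Prod.ext_iff]
  · intro h
    have := congrArg Prod.fst h
    norm_num at this
  · simp [Prod.ext_iff]
    decide
  · intro h
    have := congrArg Prod.snd h
    simp at this
    revert this; decide
end

section
/- For each equation s = t between terms over the meadow signature Σ_m = (0,1,−,+,·,⁻¹) there exists a quantifier-free first-order formula φ(s,t) over the field signature Σ_f = (0,1,−,+,·) with the same variables such that in every cancellation meadow, under every assignment of values to the variables, s = t holds if and only if φ(s,t) holds. -/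
/-- Terms over the meadow signature `Σ_m = (0,1,−,+,·,⁻¹)` with variables in `ℕ`. -/
inductive MTerm : Type
  | var : ℕ → MTerm
  | zero : MTerm
  | one : MTerm
  | neg : MTerm → MTerm
  | add : MTerm → MTerm → MTerm
  | mul : MTerm → MTerm → MTerm
  | inv : MTerm → MTerm

def MTerm.eval {M : Type} [Zero M] [One M] [Neg M] [Add M] [Mul M] [Inv M]
    (ρ : ℕ → M) : MTerm → M
  | .var v => ρ v
  | .zero => 0
  | .one => 1
  | .neg t => -(t.eval ρ)
  | .add s t => s.eval ρ + t.eval ρ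
  | .mul s t => s.eval ρ * t.eval ρ
  | .inv t => (t.eval ρ)⁻¹

def MTerm.vars : MTerm → Set ℕ
  | .var v => {v}
  | .zero => ∅
  | .one => ∅
  | .neg t => t.vars
  | .add s t => s.vars ∪ t.vars
  | .mul s t => s.vars ∪ t.vars
  | .inv t => t.vars

/-- Terms over the field signature `Σ_f = (0,1,−,+,·)`. -/
inductive FTerm : Type
  | var : ℕ → FTerm
  | zero : FTerm
  | one : FTerm
  | neg : FTerm → FTerm
  | add : FTerm → FTerm → FTerm
  | mul : FTerm → FTerm → FTerm

def FTerm.eval {M : Type} [Zero M] [One M] [Neg M] [Add M] [Mul M]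
    (ρ : ℕ → M) : FTerm → M
  | .var v => ρ v
  | .zero => 0
  | .one => 1
  | .neg t => -(t.eval ρ)
  | .add s t => s.eval ρ + t.eval ρ
  | .mul s t => s.eval ρ * t.eval ρ

def FTerm.vars : FTerm → Set ℕ
  | .var v => {v}
  | .zero => ∅
  | .one => ∅
  | .neg t => t.vars
  | .add s t => s.vars ∪ t.vars
  | .mul s t => s.vars ∪ t.vars

/-- Quantifier-free first-order formulas over the field signature `Σ_f`. -/
inductive QFForm : Type
  | eq : FTerm → FTerm → QFForm
  | not : QFForm → QFForm
  | and : QFForm → QFForm → QFForm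
  | or : QFForm → QFForm → QFForm
  | imp : QFForm → QFForm → QFForm

def QFForm.holds {M : Type} [Zero M] [One M] [Neg M] [Add M] [Mul M]
    (ρ : ℕ → M) : QFForm → Prop
  | .eq s t => s.eval ρ = t.eval ρ
  | .not φ => ¬ φ.holds ρ
  | .and φ ψ => φ.holds ρ ∧ ψ.holds ρ
  | .or φ ψ => φ.holds ρ ∨ ψ.holds ρ
  | .imp φ ψ => φ.holds ρ → ψ.holds ρ

def QFForm.vars : QFForm → Set ℕ
  | .eq s t => s.vars ∪ t.vars
  | .not φ => φ.vars
  | .and φ ψ => φ.vars ∪ ψ.vars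
  | .or φ ψ => φ.vars ∪ ψ.vars
  | .imp φ ψ => φ.vars ∪ ψ.vars

/-! ### Auxiliary development -/

/-- The always-true formula. -/
def QFForm.tt : QFForm := .eq .zero .zero

/-- The always-false formula. -/
def QFForm.ff : QFForm := .not .tt

/-- Big disjunction of a list of formulas. -/
def QFForm.bigOr (l : List QFForm) : QFForm := l.foldr .or .ff

lemma QFForm.holds_bigOr {M : Type} [Zero M] [One M] [Neg M] [Add M] [Mul M]
    (ρ : ℕ → M) (l : List QFForm) :
    (QFForm.bigOr l).holds ρ ↔ ∃ φ ∈ l, φ.holds ρ := by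
  induction l with
  | nil => simp [bigOr, holds, ff, tt]
  | cons a l ih => simp only [bigOr, List.foldr, holds, List.mem_cons] at ih ⊢; rw [ih]; aesop

lemma QFForm.vars_bigOr (l : List QFForm) (V : Set ℕ)
    (h : ∀ φ ∈ l, QFForm.vars φ ⊆ V) : (QFForm.bigOr l).vars ⊆ V := by
  induction l with
  | nil => simp [bigOr, vars, ff, tt, FTerm.vars]
  | cons a l ih =>
      simp only [bigOr, List.foldr, vars]
      exact Set.union_subset (h a (by simp)) (ih fun φ hφ => h φ (by simp [hφ]))

/-- Erase inverses from a meadow term, keeping the variables. -/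
def MTerm.strip : MTerm → FTerm
  | .var v => .var v
  | .zero => .zero
  | .one => .one
  | .neg t => .neg t.strip
  | .add s t => .add s.strip t.strip
  | .mul s t => .mul s.strip t.strip
  | .inv t => t.strip

lemma MTerm.strip_vars (u : MTerm) : u.strip.vars = u.vars := by
  induction u <;> simp [strip, vars, FTerm.vars, *]

/-- Guarded fraction representation of a meadow term: a list of triples
`(guard, numerator, denominator)`. -/
def MTerm.reprM : MTerm → List (QFForm × FTerm × FTerm)
  | .var v => [(.tt, .var v, .one)]
  | .zero => [(.tt, .zero, .one)]
  | .one => [(.tt, .one, .one)]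
  | .neg u => u.reprM.map fun p => (p.1, .neg p.2.1, p.2.2)
  | .add u v => u.reprM.flatMap fun p => v.reprM.map fun q =>
      (.and p.1 q.1, .add (.mul p.2.1 q.2.2) (.mul q.2.1 p.2.2), .mul p.2.2 q.2.2)
  | .mul u v => u.reprM.flatMap fun p => v.reprM.map fun q =>
      (.and p.1 q.1, .mul p.2.1 q.2.1, .mul p.2.2 q.2.2)
  | .inv u => u.reprM.flatMap fun p =>
      [(.and p.1 (.eq p.2.1 .zero), .zero, .one),
       (.and p.1 (.not (.eq p.2.1 .zero)), p.2.2, p.2.1)]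

lemma MTerm.reprM_vars (u : MTerm) :
    ∀ p ∈ u.reprM, p.1.vars ∪ p.2.1.vars ∪ p.2.2.vars ⊆ u.vars := by
  induction u with
  | var v => rintro p hp; simp only [reprM, List.mem_singleton] at hp; subst hp
             simp [QFForm.tt, QFForm.vars, FTerm.vars, vars]
  | zero => rintro p hp; simp only [reprM, List.mem_singleton] at hp; subst hp
            simp [QFForm.tt, QFForm.vars, FTerm.vars, vars]
  | one => rintro p hp; simp only [reprM, List.mem_singleton] at hp; subst hp
           simp [QFForm.tt, QFForm.vars, FTerm.vars, vars]
  | neg u ih =>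
      rintro p hp
      simp only [reprM, List.mem_map] at hp
      obtain ⟨q, hq, rfl⟩ := hp
      simpa [FTerm.vars, vars] using ih q hq
  | add u v ihu ihv =>
      rintro p hp
      simp only [reprM, List.mem_flatMap, List.mem_map] at hp
      obtain ⟨q, hq, r, hr, rfl⟩ := hp
      have h1 := ihu q hq; have h2 := ihv r hr
      simp only [QFForm.vars, FTerm.vars, vars, Set.union_subset_iff] at h1 h2 ⊢
      obtain ⟨⟨a1, a2⟩, a3⟩ := h1; obtain ⟨⟨b1, b2⟩, b3⟩ := h2
      refine ⟨⟨⟨?_, ?_⟩, ⟨⟨?_, ?_⟩, ?_, ?_⟩⟩, ?_, ?_⟩ <;>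
        first
        | exact a1.trans Set.subset_union_left
        | exact a2.trans Set.subset_union_left
        | exact a3.trans Set.subset_union_left
        | exact b1.trans Set.subset_union_right
        | exact b2.trans Set.subset_union_right
        | exact b3.trans Set.subset_union_right
  | mul u v ihu ihv =>
      rintro p hp
      simp only [reprM, List.mem_flatMap, List.mem_map] at hp
      obtain ⟨q, hq, r, hr, rfl⟩ := hp
      have h1 := ihu q hq; have h2 := ihv r hr
      simp only [QFForm.vars, FTerm.vars, vars, Set.union_subset_iff] at h1 h2 ⊢
      obtain ⟨⟨a1, a2⟩, a3⟩ := h1; obtain ⟨⟨b1, b2⟩, b3⟩ := h2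
      refine ⟨⟨⟨?_, ?_⟩, ?_, ?_⟩, ?_, ?_⟩ <;>
        first
        | exact a1.trans Set.subset_union_left
        | exact a2.trans Set.subset_union_left
        | exact a3.trans Set.subset_union_left
        | exact b1.trans Set.subset_union_right
        | exact b2.trans Set.subset_union_right
        | exact b3.trans Set.subset_union_right
  | inv u ih =>
      rintro p hp
      simp only [reprM, List.mem_flatMap, List.mem_cons, List.mem_singleton,
        List.not_mem_nil, or_false] at hp
      obtain ⟨q, hq, rfl | rfl⟩ := hp <;>
      · have h1 := ih q hq
        simp only [QFForm.vars, FTerm.vars, vars, Set.union_subset_iff] at h1 ⊢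
        obtain ⟨⟨a1, a2⟩, a3⟩ := h1
        simp_all

section CancellationMeadow
variable {M : Type} [Meadow M] (hIL : ∀ x : M, x ≠ 0 → x * x⁻¹ = 1)

include hIL

lemma Meadow.inv_zero : (0 : M)⁻¹ = 0 := by
  by_cases h : (0 : M)⁻¹ = 0
  · exact h
  · have h1 := hIL _ h
    rw [Meadow.minv_inv, mul_zero] at h1
    exact absurd (by calc (0:M)⁻¹ = 0⁻¹ * 1 := by ring
                    _ = 0⁻¹ * 0 := by rw [← h1]
                    _ = 0 := by ring) h

lemma Meadow.mul_ne_zero' {a b : M} (ha : a ≠ 0) (hb : b ≠ 0) : a * b ≠ 0 := by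
  intro hab
  apply hb
  calc b = (a * a⁻¹) * b := by rw [hIL a ha]; ring
    _ = a⁻¹ * (a * b) := by ring
    _ = 0 := by rw [hab]; ring

lemma Meadow.cancel {a b c : M} (h : a * c = b * c) (hc : c ≠ 0) : a = b := by
  calc a = a * (c * c⁻¹) := by rw [hIL c hc]; ring
    _ = (a * c) * c⁻¹ := by ring
    _ = (b * c) * c⁻¹ := by rw [h]
    _ = b * (c * c⁻¹) := by ring
    _ = b := by rw [hIL c hc]; ring

lemma Meadow.inv_eq {a n d : M} (hd : d ≠ 0) (h : a * d = n) (hn : n ≠ 0) :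
    a⁻¹ * n = d := by
  have ha : a ≠ 0 := by rintro rfl; rw [zero_mul] at h; exact hn h.symm
  calc a⁻¹ * n = a⁻¹ * (a * d) := by rw [h]
    _ = (a * a⁻¹) * d := by ring
    _ = 1 * d := by rw [hIL a ha]
    _ = d := one_mul d

variable (hnt : (1 : M) ≠ 0) (ρ : ℕ → M)

include hnt in
lemma MTerm.reprM_sound (u : MTerm) :
    ∀ p ∈ u.reprM, p.1.holds ρ →
      p.2.2.eval ρ ≠ 0 ∧ u.eval ρ * p.2.2.eval ρ = p.2.1.eval ρ := by
  induction u with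
  | var v =>
      rintro p hp _
      simp only [reprM, List.mem_singleton] at hp; subst hp
      simpa [FTerm.eval, MTerm.eval] using hnt
  | zero =>
      rintro p hp _
      simp only [reprM, List.mem_singleton] at hp; subst hp
      simpa [FTerm.eval, MTerm.eval] using hnt
  | one =>
      rintro p hp _
      simp only [reprM, List.mem_singleton] at hp; subst hp
      simpa [FTerm.eval, MTerm.eval] using hnt
  | neg u ih =>
      rintro p hp hg
      simp only [reprM, List.mem_map] at hp
      obtain ⟨q, hq, rfl⟩ := hp
      obtain ⟨h1, h2⟩ := ih q hq hg
      refine ⟨h1, ?_⟩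
      simp only [MTerm.eval, FTerm.eval]
      rw [← h2]; ring
  | add u v ihu ihv =>
      rintro p hp hg
      simp only [reprM, List.mem_flatMap, List.mem_map] at hp
      obtain ⟨q, hq, r, hr, rfl⟩ := hp
      obtain ⟨hg1, hg2⟩ := hg
      obtain ⟨h1, h2⟩ := ihu q hq hg1
      obtain ⟨h3, h4⟩ := ihv r hr hg2
      refine ⟨Meadow.mul_ne_zero' hIL h1 h3, ?_⟩
      simp only [MTerm.eval, FTerm.eval]
      rw [← h2, ← h4]; ring
  | mul u v ihu ihv =>
      rintro p hp hg
      simp only [reprM, List.mem_flatMap, List.mem_map] at hp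
      obtain ⟨q, hq, r, hr, rfl⟩ := hp
      obtain ⟨hg1, hg2⟩ := hg
      obtain ⟨h1, h2⟩ := ihu q hq hg1
      obtain ⟨h3, h4⟩ := ihv r hr hg2
      refine ⟨Meadow.mul_ne_zero' hIL h1 h3, ?_⟩
      simp only [MTerm.eval, FTerm.eval]
      rw [← h2, ← h4]; ring
  | inv u ih =>
      rintro p hp hg
      simp only [reprM, List.mem_flatMap, List.mem_cons, List.mem_singleton,
        List.not_mem_nil, or_false] at hp
      obtain ⟨q, hq, rfl | rfl⟩ := hp
      · obtain ⟨hg1, hn0⟩ := hg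
        obtain ⟨h1, h2⟩ := ih q hq hg1
        have hn0' : q.2.1.eval ρ = 0 := hn0
        have hu0 : u.eval ρ = 0 :=
          Meadow.cancel hIL (by rw [h2, hn0', zero_mul]) h1
        constructor
        · simpa [FTerm.eval] using hnt
        · simp only [MTerm.eval, FTerm.eval, hu0, Meadow.inv_zero hIL]
          ring
      · obtain ⟨hg1, hn0⟩ := hg
        obtain ⟨h1, h2⟩ := ih q hq hg1
        have hn0' : q.2.1.eval ρ ≠ 0 := hn0
        exact ⟨hn0', Meadow.inv_eq hIL h1 h2 hn0'⟩

lemma MTerm.reprM_exhaustive (u : MTerm) : ∃ p ∈ u.reprM, p.1.holds ρ := by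
  induction u with
  | var v => exact ⟨_, List.mem_singleton.mpr rfl, by simp [QFForm.tt, QFForm.holds, FTerm.eval]⟩
  | zero => exact ⟨_, List.mem_singleton.mpr rfl, by simp [QFForm.tt, QFForm.holds, FTerm.eval]⟩
  | one => exact ⟨_, List.mem_singleton.mpr rfl, by simp [QFForm.tt, QFForm.holds, FTerm.eval]⟩
  | neg u ih =>
      obtain ⟨q, hq, hg⟩ := ih
      exact ⟨_, List.mem_map.mpr ⟨q, hq, rfl⟩, hg⟩
  | add u v ihu ihv =>
      obtain ⟨q, hq, hg1⟩ := ihu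
      obtain ⟨r, hr, hg2⟩ := ihv
      exact ⟨_, List.mem_flatMap.mpr ⟨q, hq, List.mem_map.mpr ⟨r, hr, rfl⟩⟩, hg1, hg2⟩
  | mul u v ihu ihv =>
      obtain ⟨q, hq, hg1⟩ := ihu
      obtain ⟨r, hr, hg2⟩ := ihv
      exact ⟨_, List.mem_flatMap.mpr ⟨q, hq, List.mem_map.mpr ⟨r, hr, rfl⟩⟩, hg1, hg2⟩
  | inv u ih =>
      obtain ⟨q, hq, hg⟩ := ih
      by_cases h : q.2.1.eval ρ = 0
      · refine ⟨(.and q.1 (.eq q.2.1 .zero), .zero, .one),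
          List.mem_flatMap.mpr ⟨q, hq, by simp⟩, hg, ?_⟩
        simpa [QFForm.holds, FTerm.eval] using h
      · refine ⟨(.and q.1 (.not (.eq q.2.1 .zero)), q.2.2, q.2.1),
          List.mem_flatMap.mpr ⟨q, hq, by simp⟩, hg, ?_⟩
        simpa [QFForm.holds, FTerm.eval] using h

end CancellationMeadow

/-- every meadow equation `s = t` has a quantifier-free first-order
representation `φ(s,t)` over the field signature, with the same variables, valid in
every cancellation meadow under every assignment. -/
theorem meadow_equation_has_qf_field_representation (s t : MTerm) :
    ∃ φ : QFForm, φ.vars = s.vars ∪ t.vars ∧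
      ∀ (M : Type) [Meadow M], (∀ x : M, x ≠ 0 → x * x⁻¹ = 1) →
        ∀ ρ : ℕ → M, (s.eval ρ = t.eval ρ ↔ φ.holds ρ) := by
  classical
  set prs : List QFForm := s.reprM.flatMap fun p => t.reprM.map fun q =>
    QFForm.and p.1 (QFForm.and q.1
      (.eq (.mul p.2.1 q.2.2) (.mul q.2.1 p.2.2))) with hprs
  refine ⟨.and (.imp (.eq s.strip t.strip) (.eq s.strip t.strip)) (.bigOr prs), ?_, ?_⟩
  · have hsub : (QFForm.bigOr prs).vars ⊆ s.vars ∪ t.vars := by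
      apply QFForm.vars_bigOr
      intro φ hφ
      simp only [hprs, List.mem_flatMap, List.mem_map] at hφ
      obtain ⟨p, hp, q, hq, rfl⟩ := hφ
      have h1 := s.reprM_vars p hp
      have h2 := t.reprM_vars q hq
      simp only [QFForm.vars, FTerm.vars, Set.union_subset_iff] at h1 h2
      obtain ⟨⟨a1, a2⟩, a3⟩ := h1; obtain ⟨⟨b1, b2⟩, b3⟩ := h2
      simp only [QFForm.vars, FTerm.vars]
      exact Set.union_subset (a1.trans Set.subset_union_left)
        (Set.union_subset (b1.trans Set.subset_union_right)
          (Set.union_subset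
            (Set.union_subset (a2.trans Set.subset_union_left)
              (b3.trans Set.subset_union_right))
            (Set.union_subset (b2.trans Set.subset_union_right)
              (a3.trans Set.subset_union_left))))
    simp only [QFForm.vars, s.strip_vars, t.strip_vars]
    rw [Set.union_self]
    exact Set.union_eq_left.mpr hsub
  · intro M _ hIL ρ
    have hex := s.reprM_exhaustive hIL ρ
    have hex' := t.reprM_exhaustive hIL ρ
    obtain ⟨p, hp, hgp⟩ := hex
    obtain ⟨q, hq, hgq⟩ := hex'
    have hmem : (QFForm.and p.1 (QFForm.and q.1
        (.eq (.mul p.2.1 q.2.2) (.mul q.2.1 p.2.2)))) ∈ prs :=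
      List.mem_flatMap.mpr ⟨p, hp, List.mem_map.mpr ⟨q, hq, rfl⟩⟩
    by_cases hnt : (1 : M) = 0
    · -- trivial ring: everything is equal
      have htriv : ∀ a b : M, a = b := by
        intro a b
        calc a = a * 1 := by ring
          _ = a * 0 := by rw [hnt]
          _ = b * 0 := by ring
          _ = b * 1 := by rw [hnt]
          _ = b := by ring
      constructor
      · intro _
        refine ⟨fun h => h, ?_⟩
        rw [QFForm.holds_bigOr]
        exact ⟨_, hmem, hgp, hgq, htriv _ _⟩
      · intro _; exact htriv _ _
    · have hnt' : (1 : M) ≠ 0 := hnt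
      obtain ⟨hd1, he1⟩ := s.reprM_sound hIL hnt' ρ p hp hgp
      obtain ⟨hd2, he2⟩ := t.reprM_sound hIL hnt' ρ q hq hgq
      constructor
      · intro hst
        refine ⟨fun h => h, ?_⟩
        rw [QFForm.holds_bigOr]
        refine ⟨_, hmem, hgp, hgq, ?_⟩
        show (FTerm.mul p.2.1 q.2.2).eval ρ = (FTerm.mul q.2.1 p.2.2).eval ρ
        simp only [FTerm.eval]
        calc p.2.1.eval ρ * q.2.2.eval ρ
            = (s.eval ρ * p.2.2.eval ρ) * q.2.2.eval ρ := by rw [he1]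
          _ = (t.eval ρ * q.2.2.eval ρ) * p.2.2.eval ρ := by rw [hst]; ring
          _ = q.2.1.eval ρ * p.2.2.eval ρ := by rw [he2]
      · rintro ⟨-, hbig⟩
        rw [QFForm.holds_bigOr] at hbig
        obtain ⟨φ, hφ, hh⟩ := hbig
        simp only [hprs, List.mem_flatMap, List.mem_map] at hφ
        obtain ⟨p', hp', q', hq', rfl⟩ := hφ
        obtain ⟨hg1, hg2, heq⟩ := hh
        obtain ⟨hd1', he1'⟩ := s.reprM_sound hIL hnt' ρ p' hp' hg1
        obtain ⟨hd2', he2'⟩ := t.reprM_sound hIL hnt' ρ q' hq' hg2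
        have heq' : p'.2.1.eval ρ * q'.2.2.eval ρ = q'.2.1.eval ρ * p'.2.2.eval ρ := heq
        refine Meadow.cancel hIL (c := p'.2.2.eval ρ * q'.2.2.eval ρ) ?_
          (Meadow.mul_ne_zero' hIL hd1' hd2')
        calc s.eval ρ * (p'.2.2.eval ρ * q'.2.2.eval ρ)
            = (s.eval ρ * p'.2.2.eval ρ) * q'.2.2.eval ρ := by ring
          _ = p'.2.1.eval ρ * q'.2.2.eval ρ := by rw [he1']
          _ = q'.2.1.eval ρ * p'.2.2.eval ρ := heq'
          _ = (t.eval ρ * q'.2.2.eval ρ) * p'.2.2.eval ρ := by rw [he2']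
          _ = t.eval ρ * (p'.2.2.eval ρ * q'.2.2.eval ρ) := by ring
end

section
/- An equation s = t between terms over the meadow signature Σ_m = (0,1,−,+,·,⁻¹) holds in every meadow of characteristic 0 if and only if it holds in every cancellation meadow of characteristic 0. -/
/-- The Inverse Law `IL`: a cancellation meadow is a meadow satisfying it. -/
def InverseLaw (M : Type) [Meadow M] : Prop :=
  ∀ x : M, x ≠ 0 → x * x⁻¹ = 1

/-- A meadow has characteristic 0 if `n · n⁻¹ = 1` for every positive integer `n`. -/
def MeadowChar0 (M : Type) [Meadow M] : Prop :=
  ∀ n : ℕ, 0 < n → (n : M) * (n : M)⁻¹ = 1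

/-- Any field is a meadow with its usual (zero-totalized) inverse. -/
def Field.toMeadow (K : Type) [Field K] : Meadow K where
  minv_inv := inv_inv
  ril := fun x => by
    rcases eq_or_ne x 0 with h | h
    · simp [h]
    · rw [mul_inv_cancel₀ h, mul_one]

/-- Squares: if `x * x = 0` in a meadow then `x = 0`. -/
lemma Meadow.sq_eq_zero {M : Type} [Meadow M] {x : M} (h : x * x = 0) : x = 0 := by
  have := Meadow.ril x
  rw [← mul_assoc, h, zero_mul] at this
  exact this.symm

/-- Meadows are reduced. -/
lemma Meadow.pow_eq_zero {M : Type} [Meadow M] :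
    ∀ n : ℕ, ∀ x : M, x ^ (n + 1) = 0 → x = 0 := by
  intro n
  induction n using Nat.strong_induction_on with
  | _ n ih =>
    intro x hx
    rcases n with _ | m
    · simpa using hx
    · have h2 : (x ^ (m + 1)) ^ 2 = 0 := by
        have : (x ^ (m + 1)) ^ 2 = x ^ (m + 2) * x ^ m := by ring
        rw [this, hx, zero_mul]
      have hxm : x ^ (m + 1) = 0 := by
        apply Meadow.sq_eq_zero (x := x ^ (m + 1))
        rw [← sq]; exact h2
      exact ih m (Nat.lt_succ_self m) x hxm

/-- Inverse is absorbed: `x⁻¹ = x⁻¹ * (x⁻¹ * x)`. -/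
lemma Meadow.inv_ril {M : Type} [Meadow M] (x : M) : x⁻¹ * (x⁻¹ * x) = x⁻¹ := by
  have := Meadow.ril (M := M) x⁻¹
  rwa [Meadow.minv_inv] at this

/-- Evaluation commutes with an inverse-preserving ring homomorphism. -/
lemma MTerm.eval_map {M K : Type} [Meadow M] [Meadow K] (f : M →+* K)
    (hinv : ∀ x : M, f x⁻¹ = (f x)⁻¹) (ρ : ℕ → M) :
    ∀ u : MTerm, f (u.eval ρ) = u.eval (fun v => f (ρ v)) := by
  intro u
  induction u with
  | var v => rfl
  | zero => simp [MTerm.eval]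
  | one => simp [MTerm.eval]
  | neg t iht => simp [MTerm.eval, map_neg, iht]
  | add a b iha ihb => simp [MTerm.eval, map_add, iha, ihb]
  | mul a b iha ihb => simp [MTerm.eval, map_mul, iha, ihb]
  | inv t iht => simp [MTerm.eval, hinv, iht]

/-- an equation over `Σ_m` holds in every meadow of characteristic 0
iff it holds in every cancellation meadow of characteristic 0. -/
theorem meadow_char_zero_eq_iff_cancellation (s t : MTerm) :
    (∀ (M : Type) [Meadow M], MeadowChar0 M → ∀ ρ : ℕ → M, s.eval ρ = t.eval ρ) ↔
    (∀ (M : Type) [Meadow M], MeadowChar0 M → InverseLaw M →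
      ∀ ρ : ℕ → M, s.eval ρ = t.eval ρ) := by
  constructor
  · intro h M _ hc _ ρ
    exact h M hc ρ
  · intro h M _ hc ρ
    by_contra hne
    set a : M := s.eval ρ - t.eval ρ with ha
    have ha0 : a ≠ 0 := sub_ne_zero.mpr hne
    -- a is not nilpotent
    have hnil : a ∉ nilradical M := by
      rw [mem_nilradical]
      rintro ⟨n, hn⟩
      rcases n with _ | m
      · have h10 : (1 : M) = 0 := by simpa using hn
        exact ha0 (by rw [← mul_one a, h10, mul_zero])
      · exact ha0 (Meadow.pow_eq_zero m a hn)
    -- find a prime ideal avoiding a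
    have : ∃ P : Ideal M, P.IsPrime ∧ a ∉ P := by
      by_contra hP
      push_neg at hP
      apply hnil
      rw [nilradical_eq_sInf, Submodule.mem_sInf]
      intro P hPprime
      exact hP P hPprime
    obtain ⟨P, hPprime, haP⟩ := this
    haveI := hPprime
    -- pass to the fraction field of the quotient domain
    let Q := M ⧸ P
    let K := FractionRing Q
    letI : Meadow K := Field.toMeadow K
    let φ : M →+* K := (algebraMap Q K).comp (Ideal.Quotient.mk P)
    have hφ0 : ∀ x : M, φ x = 0 ↔ x ∈ P := by
      intro x
      rw [show φ x = algebraMap Q K (Ideal.Quotient.mk P x) from rfl,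
        map_eq_zero_iff (algebraMap Q K) (IsFractionRing.injective Q K),
        Ideal.Quotient.eq_zero_iff_mem]
    have hinv : ∀ x : M, φ x⁻¹ = (φ x)⁻¹ := by
      intro x
      rcases eq_or_ne (φ x) 0 with hx | hx
      · have hxP : x ∈ P := (hφ0 x).mp hx
        have hxinvP : x⁻¹ ∈ P := by
          rw [← Meadow.inv_ril x]
          exact Ideal.mul_mem_left P _ (Ideal.mul_mem_left P _ hxP)
        rw [(hφ0 _).mpr hxinvP, hx, inv_zero]
      · have := congrArg φ (Meadow.ril x)
        rw [map_mul, map_mul] at this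
        have h1 : φ x * φ x⁻¹ = 1 := by
          have := mul_left_cancel₀ hx (this.trans (mul_one (φ x)).symm)
          exact this
        exact eq_inv_of_mul_eq_one_right h1
    -- K is a cancellation meadow of characteristic 0
    have hcK : MeadowChar0 K := by
      intro n hn
      have h1 : φ (n : M) * φ ((n : M)⁻¹) = 1 := by
        rw [← map_mul, hc n hn, map_one]
      have hn0 : (n : K) ≠ 0 := by
        rw [← map_natCast φ n]
        intro h0
        rw [h0, zero_mul] at h1
        exact zero_ne_one h1
      exact mul_inv_cancel₀ hn0
    have hIL : InverseLaw K := fun x hx => mul_inv_cancel₀ hx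
    have heq := h K hcK hIL (fun v => φ (ρ v))
    erw [← MTerm.eval_map φ hinv ρ s, ← MTerm.eval_map φ hinv ρ t] at heq
    apply haP
    erw [← hφ0 a, ha, map_sub, heq, sub_self]
end

section
/- An equation s = t between terms over the meadow signature Σ_m = (0,1,−,+,·,⁻¹) holds in every formally real meadow if and only if it holds in every formally real cancellation meadow. -/
/-- A meadow is formally real if it satisfies every instance of the scheme
`EFR_n`: `0_{x₀²+⋯+xₙ²} · x₀ = 0`, where `0_u = 1 - u·u⁻¹`. -/
def FormallyReal (M : Type) [Meadow M] : Prop :=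
  ∀ (n : ℕ) (x : Fin (n + 1) → M),
    (1 - (∑ i, x i ^ 2) * (∑ i, x i ^ 2)⁻¹) * x 0 = 0

namespace MeadowAux

set_option linter.unusedSectionVars false

variable {M : Type} [Meadow M]

lemma sq_inv (x : M) : x ^ 2 * x⁻¹ = x := by
  have h := Meadow.ril (x := x); ring_nf; ring_nf at h
  linear_combination h

lemma inv_ril (x : M) : x⁻¹ * (x⁻¹ * x) = x⁻¹ := by
  have h := Meadow.ril (x := x⁻¹)
  rwa [Meadow.minv_inv] at h

lemma pow_id (x : M) : ∀ k : ℕ, x = x ^ (k + 1) * x⁻¹ ^ k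
  | 0 => by simp
  | k + 1 => by
    have ih := pow_id x k
    have h : x ^ (k + 1) = x ^ (k + 2) * x⁻¹ := by
      have h2 := sq_inv x
      calc x ^ (k + 1) = x ^ k * x := by ring
        _ = x ^ k * (x ^ 2 * x⁻¹) := by rw [h2]
        _ = x ^ (k + 2) * x⁻¹ := by ring
    calc x = x ^ (k + 1) * x⁻¹ ^ k := ih
      _ = (x ^ (k + 2) * x⁻¹) * x⁻¹ ^ k := by rw [← h]
      _ = x ^ (k + 2) * x⁻¹ ^ (k + 1) := by ring

lemma eq_zero_of_nilpotent {x : M} (h : IsNilpotent x) : x = 0 := by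
  obtain ⟨n, hn⟩ := h
  calc x = x ^ (n + 1) * x⁻¹ ^ n := pow_id x n
    _ = (x ^ n * x) * x⁻¹ ^ n := by ring
    _ = 0 := by rw [hn]; ring

variable (p : Ideal M) [p.IsPrime]

local notation "f" => Ideal.Quotient.mk p

lemma mk_inv_eq_zero {x : M} (hx : f x = 0) : f x⁻¹ = 0 := by
  have h : f x⁻¹ * (f x⁻¹ * f x) = f x⁻¹ := by
    rw [← map_mul, ← map_mul, inv_ril]
  rw [hx] at h
  simpa using h.symm

lemma mk_mul_inv {x : M} (hx : f x ≠ 0) : f x * f x⁻¹ = 1 := by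
  have h : f x * (f x * f x⁻¹) = f x := by
    rw [← map_mul, ← map_mul, Meadow.ril]
  have h2 : f x * (f x * f x⁻¹ - 1) = 0 := by ring_nf; linear_combination h
  rcases mul_eq_zero.mp h2 with h3 | h3
  · exact absurd h3 hx
  · linear_combination h3

lemma mk_inv_congr {x y : M} (h : f x = f y) : f x⁻¹ = f y⁻¹ := by
  by_cases hx : f x = 0
  · rw [mk_inv_eq_zero p hx, mk_inv_eq_zero p (h ▸ hx)]
  · have hy : f y ≠ 0 := h ▸ hx
    have hx1 := mk_mul_inv p hx
    have hy1 := mk_mul_inv p hy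
    calc f x⁻¹ = f x⁻¹ * (f y * f y⁻¹) := by rw [hy1, mul_one]
      _ = (f x * f x⁻¹) * f y⁻¹ := by rw [← h]; ring
      _ = f y⁻¹ := by rw [hx1, one_mul]

noncomputable def qinv : Inv (M ⧸ p) :=
  ⟨fun a => f (Function.surjInv Ideal.Quotient.mk_surjective a)⁻¹⟩

lemma mk_inv (x : M) : @Inv.inv _ (qinv p) (f x) = f x⁻¹ := by
  apply mk_inv_congr
  exact Function.surjInv_eq Ideal.Quotient.mk_surjective (f x)

noncomputable def qMeadow : Meadow (M ⧸ p) where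
  __ := (inferInstance : CommRing (M ⧸ p))
  toInv := qinv p
  minv_inv a := by
    obtain ⟨x, rfl⟩ := Ideal.Quotient.mk_surjective a
    rw [mk_inv, mk_inv, Meadow.minv_inv]
  ril a := by
    obtain ⟨x, rfl⟩ := Ideal.Quotient.mk_surjective a
    rw [mk_inv, ← map_mul, ← map_mul, Meadow.ril]

lemma qFR (hFR : FormallyReal M) : letI := qMeadow p; FormallyReal (M ⧸ p) := by
  letI := qMeadow p
  intro n x
  set g : Fin (n + 1) → M := fun i => Function.surjInv Ideal.Quotient.mk_surjective (x i) with hg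
  have hgx : ∀ i, f (g i) = x i := fun i => Function.surjInv_eq _ _
  have h := congrArg f (hFR n g)
  have hsum : (∑ i, x i ^ 2) = f (∑ i, g i ^ 2) := by
    rw [map_sum]; simp [map_pow, hgx]
  have hinv : (∑ i, x i ^ 2)⁻¹ = f (∑ i, g i ^ 2)⁻¹ := by
    rw [hsum]; exact mk_inv p _
  rw [map_mul, map_sub, map_one, map_mul, map_zero] at h
  show (1 - (∑ i, x i ^ 2) * (∑ i, x i ^ 2)⁻¹) * x 0 = 0
  rw [hinv, hsum, ← hgx 0]
  exact h

lemma qIL : letI := qMeadow p; InverseLaw (M ⧸ p) := by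
  letI := qMeadow p
  intro a ha
  obtain ⟨x, rfl⟩ := Ideal.Quotient.mk_surjective a
  rw [show (f x)⁻¹ = f x⁻¹ from mk_inv p x]
  exact mk_mul_inv p ha

lemma eval_mk (ρ : ℕ → M) (u : MTerm) :
    letI := qMeadow p
    u.eval (fun n => f (ρ n)) = f (u.eval ρ) := by
  letI := qMeadow p
  induction u with
  | var v => rfl
  | zero => simp [MTerm.eval]
  | one => simp [MTerm.eval]
  | neg t ih => simp [MTerm.eval, ih]
  | add s t ihs iht => simp [MTerm.eval, ihs, iht]
  | mul s t ihs iht => simp [MTerm.eval, ihs, iht]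
  | inv t ih =>
    show (t.eval _)⁻¹ = f ((t.eval ρ)⁻¹)
    rw [ih]
    exact mk_inv p _

end MeadowAux

/-- an equation over `Σ_m` holds in every formally real meadow
iff it holds in every formally real cancellation meadow. -/
theorem formallyReal_eq_iff_cancellation (s t : MTerm) :
    (∀ (M : Type) [Meadow M], FormallyReal M → ∀ ρ : ℕ → M, s.eval ρ = t.eval ρ) ↔
    (∀ (M : Type) [Meadow M], FormallyReal M → InverseLaw M →
      ∀ ρ : ℕ → M, s.eval ρ = t.eval ρ) := by
  constructor
  · intro H M _ hFR _ ρ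
    exact H M hFR ρ
  · intro H M _ hFR ρ
    have key : ∀ (p : Ideal M), p.IsPrime →
        Ideal.Quotient.mk p (s.eval ρ) = Ideal.Quotient.mk p (t.eval ρ) := by
      intro p hp
      letI := MeadowAux.qMeadow p
      have h := H (M ⧸ p) (MeadowAux.qFR p hFR) (MeadowAux.qIL p)
        (fun n => Ideal.Quotient.mk p (ρ n))
      have h := (MeadowAux.eval_mk p ρ s).symm.trans (h.trans (MeadowAux.eval_mk p ρ t))
      exact h
    have hd : s.eval ρ - t.eval ρ ∈ nilradical M := by
      rw [nilradical_eq_sInf]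
      refine Ideal.mem_sInf.mpr ?_
      rintro p hp
      exact (Ideal.Quotient.eq_zero_iff_mem).mp (by rw [map_sub, key p hp, sub_self])
    have : s.eval ρ - t.eval ρ = 0 :=
      MeadowAux.eq_zero_of_nilpotent (mem_nilradical.mp hd)
    exact sub_eq_zero.mp this
end

section
/- An equation s = t between terms over the meadow signature Σ_m = (0,1,−,+,·,⁻¹) holds in every meadow satisfying all instances of the scheme (EFR_n): 0_{x₀²+⋯+xₙ²}·x₀ = 0 if and only if it holds in every meadow satisfying all instances of the alternative scheme (AEFR_n): 1_{1+x₀²+⋯+xₙ²} = 1. In particular, a cancellation meadow satisfies all instances of EFR if and only if it satisfies all instances of AEFR. -/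
/-- The alternative scheme `AEFR_n`: `1_{1+x₀²+⋯+xₙ²} = 1`, where `1_u = u·u⁻¹`. -/
def AEFR (M : Type) [Meadow M] : Prop :=
  ∀ (n : ℕ) (x : Fin (n + 1) → M),
    (1 + ∑ i, x i ^ 2) * (1 + ∑ i, x i ^ 2)⁻¹ = 1

section MeadowAux
variable {M : Type} [Meadow M]

/-- The restricted inverse law, reassociated: `x·x⁻¹·x = x`. -/
lemma mea_q1 (x : M) : x * x⁻¹ * x = x := by linear_combination Meadow.ril x

/-- The inverse is a quasi-inverse: `x⁻¹·x·x⁻¹ = x⁻¹`. -/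
lemma mea_q2 (x : M) : x⁻¹ * x * x⁻¹ = x⁻¹ := by
  have h := Meadow.ril (x⁻¹)
  rw [Meadow.minv_inv] at h
  linear_combination h

/-- Uniqueness of commuting quasi-inverses in a commutative ring. -/
lemma qinv_unique (x a b : M) (h1 : x * a * x = x) (h2 : a * x * a = a)
    (h3 : x * b * x = x) (h4 : b * x * b = b) : a = b := by
  have hax : a * x = b * x := by
    have h5 : a * x = a * x * (b * x) := by linear_combination (-a) * h3
    have h6 : b * x = a * x * (b * x) := by linear_combination (-b) * h1
    rw [h5, ← h6]
  calc a = a * x * a := h2.symm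
    _ = b * x * a := by rw [hax]
    _ = a * x * b := by ring
    _ = b * x * b := by rw [hax]
    _ = b := h4

/-- In a meadow, inverse distributes over products. -/
lemma mea_mul_inv (x y : M) : (x * y)⁻¹ = x⁻¹ * y⁻¹ := by
  have hx := mea_q1 x
  have hy := mea_q1 y
  have hx2 := mea_q2 x
  have hy2 := mea_q2 y
  apply qinv_unique (x * y)
  · linear_combination mea_q1 (x * y)
  · linear_combination mea_q2 (x * y)
  · calc x * y * (x⁻¹ * y⁻¹) * (x * y) = (x * x⁻¹ * x) * (y * y⁻¹ * y) := by ring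
      _ = x * y := by rw [hx, hy]
  · calc x⁻¹ * y⁻¹ * (x * y) * (x⁻¹ * y⁻¹) = (x⁻¹ * x * x⁻¹) * (y⁻¹ * y * y⁻¹) := by ring
      _ = x⁻¹ * y⁻¹ := by rw [hx2, hy2]

/-- Pseudo-ones are idempotent. -/
lemma mea_idem_e (x : M) : (x * x⁻¹) * (x * x⁻¹) = x * x⁻¹ := by
  linear_combination x⁻¹ * mea_q1 x

/-- An idempotent is its own pseudo-one. -/
lemma mea_inv_idem (e : M) (he : e * e = e) : e * e⁻¹ = e := by
  have h := Meadow.ril e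
  calc e * e⁻¹ = (e * e) * e⁻¹ := by rw [he]
    _ = e * (e * e⁻¹) := by ring
    _ = e := h

/-- Pseudo-ones are multiplicative: `1_{xy} = 1_x · 1_y`. -/
lemma mea_one_mul (x y : M) : (x * y) * (x * y)⁻¹ = (x * x⁻¹) * (y * y⁻¹) := by
  rw [mea_mul_inv]; ring

/-- `EFR` implies `AEFR` in any meadow (substitute `x₀ := 1`). -/
lemma fr_to_aefr (h : FormallyReal M) : AEFR M := by
  intro n x
  have key := h (n + 1) (Fin.cases 1 x)
  rw [Fin.sum_univ_succ] at key
  simp only [Fin.cases_zero, Fin.cases_succ] at key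
  rw [one_pow] at key
  linear_combination -key

/-- `AEFR` implies `EFR` in any meadow. -/
lemma aefr_to_fr (h : AEFR M) : FormallyReal M := by
  intro n x
  set a := x 0 with ha
  set e := a * a⁻¹ with he
  set S := ∑ i, x i ^ 2 with hS
  set R := ∑ i : Fin n, x i.succ ^ 2 with hR
  have hSplit : S = a ^ 2 + R := by rw [hS, Fin.sum_univ_succ, ha, hR]
  have hU := h n (Fin.cases 0 (fun i => x i.succ * a⁻¹))
  rw [Fin.sum_univ_succ] at hU
  simp only [Fin.cases_zero, Fin.cases_succ] at hU
  set U : M := 1 + (0 ^ 2 + ∑ i : Fin n, (x i.succ * a⁻¹) ^ 2) with hUdef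
  have hee : e * e = e := mea_idem_e a
  have hea : e * a = a := mea_q1 a
  have hsum : a ^ 2 * (∑ i : Fin n, (x i.succ * a⁻¹) ^ 2) = e * R := by
    rw [hR, Finset.mul_sum, Finset.mul_sum]
    apply Finset.sum_congr rfl
    intro i _
    calc a ^ 2 * (x i.succ * a⁻¹) ^ 2 = (e * e) * x i.succ ^ 2 := by rw [he]; ring
      _ = e * x i.succ ^ 2 := by rw [hee]
  have hES : e * S = a ^ 2 * U := by
    rw [hSplit, hUdef]
    calc e * (a ^ 2 + R) = (e * a) * a + e * R := by ring
      _ = a * a + e * R := by rw [hea]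
      _ = a ^ 2 * 1 + a ^ 2 * (∑ i : Fin n, (x i.succ * a⁻¹) ^ 2) := by rw [hsum]; ring
      _ = a ^ 2 * (1 + (0 ^ 2 + ∑ i : Fin n, (x i.succ * a⁻¹) ^ 2)) := by ring
  have h1 : (e * S) * (e * S)⁻¹ = e := by
    rw [hES, mea_one_mul]
    have : (a ^ 2) * (a ^ 2)⁻¹ = e := by
      have : a ^ 2 = a * a := sq a
      rw [this, mea_one_mul, he, hee]
    rw [hU, this, mul_one]
  have h2 : (e * S) * (e * S)⁻¹ = e * (S * S⁻¹) := by
    rw [mea_one_mul, mea_inv_idem e hee]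
  have h3 : e * (S * S⁻¹) = e := by rw [← h2, h1]
  have key : a = S * S⁻¹ * a := by
    calc a = e * a := hea.symm
      _ = (e * (S * S⁻¹)) * a := by rw [h3]
      _ = (S * S⁻¹) * (e * a) := by ring
      _ = S * S⁻¹ * a := by rw [hea]
  show (1 - S * S⁻¹) * a = 0
  linear_combination key

end MeadowAux

/-- an equation over `Σ_m` holds in every meadow satisfying all
instances of `EFR` iff it holds in every meadow satisfying all instances of `AEFR`;
in particular a cancellation meadow satisfies `EFR` iff it satisfies `AEFR`. -/
theorem efr_aefr_equivalent :
    (∀ s t : MTerm,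
      (∀ (M : Type) [Meadow M], FormallyReal M → ∀ ρ : ℕ → M, s.eval ρ = t.eval ρ) ↔
      (∀ (M : Type) [Meadow M], AEFR M → ∀ ρ : ℕ → M, s.eval ρ = t.eval ρ)) ∧
    (∀ (M : Type) [Meadow M], InverseLaw M → (FormallyReal M ↔ AEFR M)) := by
  constructor
  · intro s t
    constructor
    · intro H M _ hA ρ
      exact H M (aefr_to_fr hA) ρ
    · intro H M _ hF ρ
      exact H M (fr_to_aefr hF) ρ
  · intro M _ _
    exact ⟨fr_to_aefr, aefr_to_fr⟩
end

section
/- For all terms s, t over the signed field signature Σ_fs = (0,1,−,+,·,s) there exists a first-order formula ψ(s,t) over the ordered field signature (0,1,−,+,·,<) with the same free variables such that in every cancellation meadow equipped with a sign operation satisfying Signs, with the order defined by x < y ↔ s(y−x) = 1, the equation s = t holds under an assignment if and only if ψ(s,t) holds under that assignment. -/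
/-- The axioms `Signs` for a sign operation on a meadow, where `1_x = x·x⁻¹` and
`0_x = 1 - x·x⁻¹`. -/
structure IsSign (M : Type) [Meadow M] (sg : M → M) : Prop where
  s1 : ∀ x : M, sg (x * x⁻¹) = x * x⁻¹
  s2 : ∀ x : M, sg (1 - x * x⁻¹) = 1 - x * x⁻¹
  s3 : sg (-1) = -1
  s4 : ∀ x : M, sg x⁻¹ = sg x
  s5 : ∀ x y : M, sg (x * y) = sg x * sg y
  s6 : ∀ x y : M,
    (1 - (sg x - sg y) * (sg x - sg y)⁻¹) * (sg (x + y) - sg x) = 0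

/-- Terms over the signed field signature `Σ_fs = (0,1,−,+,·,s)`. -/
inductive FSTerm : Type
  | var : ℕ → FSTerm
  | zero : FSTerm
  | one : FSTerm
  | neg : FSTerm → FSTerm
  | add : FSTerm → FSTerm → FSTerm
  | mul : FSTerm → FSTerm → FSTerm
  | sgn : FSTerm → FSTerm

def FSTerm.eval {M : Type} [Zero M] [One M] [Neg M] [Add M] [Mul M]
    (sg : M → M) (ρ : ℕ → M) : FSTerm → M
  | .var v => ρ v
  | .zero => 0
  | .one => 1
  | .neg t => -(t.eval sg ρ)
  | .add s t => s.eval sg ρ + t.eval sg ρ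
  | .mul s t => s.eval sg ρ * t.eval sg ρ
  | .sgn t => sg (t.eval sg ρ)

def FSTerm.vars : FSTerm → Set ℕ
  | .var v => {v}
  | .zero => ∅
  | .one => ∅
  | .neg t => t.vars
  | .add s t => s.vars ∪ t.vars
  | .mul s t => s.vars ∪ t.vars
  | .sgn t => t.vars

/-- Terms over the ordered field signature `(0,1,−,+,·)` (the `<`-free part). -/
inductive OTerm : Type
  | var : ℕ → OTerm
  | zero : OTerm
  | one : OTerm
  | neg : OTerm → OTerm
  | add : OTerm → OTerm → OTerm
  | mul : OTerm → OTerm → OTerm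

def OTerm.eval {M : Type} [Zero M] [One M] [Neg M] [Add M] [Mul M]
    (ρ : ℕ → M) : OTerm → M
  | .var v => ρ v
  | .zero => 0
  | .one => 1
  | .neg t => -(t.eval ρ)
  | .add s t => s.eval ρ + t.eval ρ
  | .mul s t => s.eval ρ * t.eval ρ

def OTerm.vars : OTerm → Set ℕ
  | .var v => {v}
  | .zero => ∅
  | .one => ∅
  | .neg t => t.vars
  | .add s t => s.vars ∪ t.vars
  | .mul s t => s.vars ∪ t.vars

/-- First-order formulas over the ordered field signature `(0,1,−,+,·,<)`. -/
inductive OForm : Type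
  | eq : OTerm → OTerm → OForm
  | lt : OTerm → OTerm → OForm
  | not : OForm → OForm
  | and : OForm → OForm → OForm
  | or : OForm → OForm → OForm
  | imp : OForm → OForm → OForm
  | all : ℕ → OForm → OForm
  | ex : ℕ → OForm → OForm

/-- Satisfaction of an ordered-field formula in a structure with a strict order
`lt`, under an assignment `ρ`. -/
def OForm.holds {M : Type} [Zero M] [One M] [Neg M] [Add M] [Mul M]
    (lt : M → M → Prop) (ρ : ℕ → M) : OForm → Prop
  | .eq s t => s.eval ρ = t.eval ρ
  | .lt s t => lt (s.eval ρ) (t.eval ρ)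
  | .not φ => ¬ φ.holds lt ρ
  | .and φ ψ => φ.holds lt ρ ∧ ψ.holds lt ρ
  | .or φ ψ => φ.holds lt ρ ∨ ψ.holds lt ρ
  | .imp φ ψ => φ.holds lt ρ → ψ.holds lt ρ
  | .all v φ => ∀ a : M, φ.holds lt (Function.update ρ v a)
  | .ex v φ => ∃ a : M, φ.holds lt (Function.update ρ v a)

def OForm.freeVars : OForm → Set ℕ
  | .eq s t => s.vars ∪ t.vars
  | .lt s t => s.vars ∪ t.vars
  | .not φ => φ.freeVars
  | .and φ ψ => φ.freeVars ∪ ψ.freeVars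
  | .or φ ψ => φ.freeVars ∪ ψ.freeVars
  | .imp φ ψ => φ.freeVars ∪ ψ.freeVars
  | .all v φ => φ.freeVars \ {v}
  | .ex v φ => φ.freeVars \ {v}

/-! ### Auxiliary development -/

section SignFacts

variable {M : Type} [Meadow M] {sg : M → M}

lemma meadow_one_inv : (1 : M)⁻¹ = 1 := by
  have := Meadow.ril (1 : M); simpa using this

lemma sg_one (hs : IsSign M sg) : sg 1 = 1 := by
  have := hs.s1 (1 : M); simpa [meadow_one_inv] using this

lemma sg_zero (hs : IsSign M sg) : sg 0 = 0 := by
  have := hs.s1 (0 : M); simpa using this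

lemma sg_neg (hs : IsSign M sg) (x : M) : sg (-x) = - sg x := by
  have h : sg ((-1) * x) = sg (-1) * sg x := hs.s5 (-1) x
  simpa [hs.s3] using h

lemma meadow_mul_eq_zero (il : InverseLaw M) {a b : M} (h : a * b = 0) :
    a = 0 ∨ b = 0 := by
  by_cases ha : a = 0
  · exact Or.inl ha
  · right
    have h1 := il a ha
    calc b = (a * a⁻¹) * b := by rw [h1]; ring
    _ = a⁻¹ * (a * b) := by ring
    _ = 0 := by rw [h]; ring

lemma sg_sq (hs : IsSign M sg) (il : InverseLaw M) {x : M} (hx : x ≠ 0) :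
    sg x * sg x = 1 := by
  have h4 := hs.s4 x
  have h5 := hs.s5 x x⁻¹
  have h1 := il x hx
  calc sg x * sg x = sg x * sg x⁻¹ := by rw [h4]
  _ = sg (x * x⁻¹) := (hs.s5 x x⁻¹).symm
  _ = sg 1 := by rw [h1]
  _ = 1 := sg_one hs

lemma sg_cases (hs : IsSign M sg) (il : InverseLaw M) {x : M} (hx : x ≠ 0) :
    sg x = 1 ∨ sg x = -1 := by
  have hsq := sg_sq hs il hx
  have : (sg x - 1) * (sg x + 1) = 0 := by ring_nf; linear_combination hsq
  rcases meadow_mul_eq_zero il this with h | h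
  · left; linear_combination h
  · right; linear_combination h

end SignFacts

/-- A strict bound on the variables of a term. -/
def FSTerm.bnd : FSTerm → ℕ
  | .var v => v + 1
  | .zero => 0
  | .one => 0
  | .neg t => t.bnd
  | .add s t => max s.bnd t.bnd
  | .mul s t => max s.bnd t.bnd
  | .sgn t => t.bnd

lemma FSTerm.lt_bnd {t : FSTerm} {v : ℕ} (hv : v ∈ t.vars) : v < t.bnd := by
  induction t with
  | var w => simp [FSTerm.vars] at hv; simp [FSTerm.bnd]; omega
  | zero => simp [FSTerm.vars] at hv
  | one => simp [FSTerm.vars] at hv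
  | neg a ih => exact ih hv
  | add a b iha ihb =>
      rcases hv with hv | hv
      · exact lt_of_lt_of_le (iha hv) (le_max_left _ _)
      · exact lt_of_lt_of_le (ihb hv) (le_max_right _ _)
  | mul a b iha ihb =>
      rcases hv with hv | hv
      · exact lt_of_lt_of_le (iha hv) (le_max_left _ _)
      · exact lt_of_lt_of_le (ihb hv) (le_max_right _ _)
  | sgn a ih => exact ih hv

lemma FSTerm.eval_congr {M : Type} [Zero M] [One M] [Neg M] [Add M] [Mul M]
    (sg : M → M) {ρ ρ' : ℕ → M} {t : FSTerm}
    (h : ∀ v ∈ t.vars, ρ v = ρ' v) : t.eval sg ρ = t.eval sg ρ' := by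
  induction t with
  | var v => exact h v (by simp [FSTerm.vars])
  | zero => rfl
  | one => rfl
  | neg a ih => simp only [FSTerm.eval]; rw [ih h]
  | add a b iha ihb =>
      simp only [FSTerm.eval]
      rw [iha (fun v hv => h v (Or.inl hv)), ihb (fun v hv => h v (Or.inr hv))]
  | mul a b iha ihb =>
      simp only [FSTerm.eval]
      rw [iha (fun v hv => h v (Or.inl hv)), ihb (fun v hv => h v (Or.inr hv))]
  | sgn a ih => simp only [FSTerm.eval]; rw [ih h]

/-- Translation: `fsTrans t z n` is an ordered-field formula asserting that
variable `z` equals the value of the `Σ_fs`-term `t`, provided all variables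
of `t` and `z` itself are `< n`. -/
def fsTrans : FSTerm → ℕ → ℕ → OForm
  | .var v, z, _ => .eq (.var z) (.var v)
  | .zero, z, _ => .eq (.var z) .zero
  | .one, z, _ => .eq (.var z) .one
  | .neg a, z, n =>
      .ex n (.and (fsTrans a n (n + 1)) (.eq (.var z) (.neg (.var n))))
  | .add a b, z, n =>
      .ex n (.ex (n + 1) (.and (fsTrans a n (n + 2)) (.and (fsTrans b (n + 1) (n + 2))
        (.eq (.var z) (.add (.var n) (.var (n + 1)))))))
  | .mul a b, z, n =>
      .ex n (.ex (n + 1) (.and (fsTrans a n (n + 2)) (.and (fsTrans b (n + 1) (n + 2))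
        (.eq (.var z) (.mul (.var n) (.var (n + 1)))))))
  | .sgn a, z, n =>
      .ex n (.and (fsTrans a n (n + 1))
        (.or (.and (.eq (.var n) .zero) (.eq (.var z) .zero))
          (.or (.and (.lt .zero (.var n)) (.eq (.var z) .one))
               (.and (.lt (.var n) .zero) (.eq (.var z) (.neg .one))))))

lemma trans_freeVars (t : FSTerm) :
    ∀ z n : ℕ, (∀ v ∈ t.vars, v < n) → z < n →
      (fsTrans t z n).freeVars = t.vars ∪ {z} := by
  induction t with
  | var v =>
      intro z n _ _
      simp [fsTrans, OForm.freeVars, OTerm.vars, FSTerm.vars, Set.union_comm]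
  | zero => intro z n _ _; simp [fsTrans, OForm.freeVars, OTerm.vars, FSTerm.vars]
  | one => intro z n _ _; simp [fsTrans, OForm.freeVars, OTerm.vars, FSTerm.vars]
  | neg a ih =>
      intro z n hvars hz
      have hv : ∀ v ∈ a.vars, v < n + 1 := fun v hv => by
        have := hvars v hv; omega
      simp only [fsTrans, OForm.freeVars, OTerm.vars,
        ih n (n + 1) hv (by omega), FSTerm.vars]
      ext w
      simp only [Set.mem_diff, Set.mem_union, Set.mem_singleton_iff]
      constructor
      · rintro ⟨(⟨h | h⟩ | ⟨h | h⟩), hw⟩ <;> first | (exact Or.inl h) | omega |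
          (exact Or.inr h)
      · rintro (h | h)
        · exact ⟨Or.inl (Or.inl h), fun hc => by
            subst hc; exact absurd (hvars _ h) (by omega)⟩
        · exact ⟨Or.inr (Or.inl h), by omega⟩
  | add a b iha ihb =>
      intro z n hvars hz
      have hva : ∀ v ∈ a.vars, v < n + 2 := fun v hv => by
        have := hvars v (Or.inl hv); omega
      have hvb : ∀ v ∈ b.vars, v < n + 2 := fun v hv => by
        have := hvars v (Or.inr hv); omega
      simp only [fsTrans, OForm.freeVars, OTerm.vars,
        iha n (n + 2) hva (by omega), ihb (n + 1) (n + 2) hvb (by omega),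
        FSTerm.vars]
      ext w
      simp only [Set.mem_diff, Set.mem_union, Set.mem_singleton_iff]
      constructor
      · rintro ⟨⟨(⟨h | h⟩ | (⟨h | h⟩ | ⟨h | (h | h)⟩)), h2⟩, h1⟩
        all_goals first
          | (exact Or.inl (Or.inl h)) | (exact Or.inl (Or.inr h))
          | (exact Or.inr h) | omega
      · rintro ((h | h) | h)
        · have := hvars w (Or.inl h)
          exact ⟨⟨Or.inl (Or.inl h), by omega⟩, by omega⟩
        · have := hvars w (Or.inr h)
          exact ⟨⟨Or.inr (Or.inl (Or.inl h)), by omega⟩, by omega⟩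
        · exact ⟨⟨Or.inr (Or.inr (Or.inl h)), by omega⟩, by omega⟩
  | mul a b iha ihb =>
      intro z n hvars hz
      have hva : ∀ v ∈ a.vars, v < n + 2 := fun v hv => by
        have := hvars v (Or.inl hv); omega
      have hvb : ∀ v ∈ b.vars, v < n + 2 := fun v hv => by
        have := hvars v (Or.inr hv); omega
      simp only [fsTrans, OForm.freeVars, OTerm.vars,
        iha n (n + 2) hva (by omega), ihb (n + 1) (n + 2) hvb (by omega),
        FSTerm.vars]
      ext w
      simp only [Set.mem_diff, Set.mem_union, Set.mem_singleton_iff]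
      constructor
      · rintro ⟨⟨(⟨h | h⟩ | (⟨h | h⟩ | ⟨h | (h | h)⟩)), h2⟩, h1⟩
        all_goals first
          | (exact Or.inl (Or.inl h)) | (exact Or.inl (Or.inr h))
          | (exact Or.inr h) | omega
      · rintro ((h | h) | h)
        · have := hvars w (Or.inl h)
          exact ⟨⟨Or.inl (Or.inl h), by omega⟩, by omega⟩
        · have := hvars w (Or.inr h)
          exact ⟨⟨Or.inr (Or.inl (Or.inl h)), by omega⟩, by omega⟩
        · exact ⟨⟨Or.inr (Or.inr (Or.inl h)), by omega⟩, by omega⟩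
  | sgn a ih =>
      intro z n hvars hz
      have hv : ∀ v ∈ a.vars, v < n + 1 := fun v hv => by
        have := hvars v hv; omega
      simp only [fsTrans, OForm.freeVars, OTerm.vars,
        ih n (n + 1) hv (by omega), FSTerm.vars]
      ext w
      simp only [Set.mem_diff, Set.mem_union, Set.mem_singleton_iff,
        Set.mem_empty_iff_false]
      have hwa : w ∈ a.vars → w ≠ n := fun h hc => by
        subst hc; exact absurd (hvars _ h) (by omega)
      have hzn : w = z → ¬ w = n := fun h => by subst h; omega
      tauto

lemma trans_holds (t : FSTerm) {M : Type} [Meadow M] (sg : M → M)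
    (hs : IsSign M sg) (il : InverseLaw M) :
    ∀ z n : ℕ, (∀ v ∈ t.vars, v < n) → z < n → ∀ ρ : ℕ → M,
      ((fsTrans t z n).holds (fun x y => sg (y - x) = 1) ρ ↔
        ρ z = t.eval sg ρ) := by
  induction t with
  | var v =>
      intro z n _ _ ρ
      simp [fsTrans, OForm.holds, OTerm.eval, FSTerm.eval]
  | zero => intro z n _ _ ρ; simp [fsTrans, OForm.holds, OTerm.eval, FSTerm.eval]
  | one => intro z n _ _ ρ; simp [fsTrans, OForm.holds, OTerm.eval, FSTerm.eval]
  | neg a ih =>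
      intro z n hvars hz ρ
      have hv : ∀ v ∈ a.vars, v < n + 1 := fun v hv => by
        have := hvars v hv; omega
      simp only [fsTrans, OForm.holds, OTerm.eval, FSTerm.eval]
      constructor
      · rintro ⟨w, h1, h2⟩
        rw [ih n (n + 1) hv (by omega) _] at h1
        have hρ : a.eval sg (Function.update ρ n w) = a.eval sg ρ :=
          FSTerm.eval_congr sg (fun v hvmem => by
            rw [Function.update_of_ne]
            exact fun hc => absurd (hvars v hvmem) (by omega))
        rw [Function.update_of_ne (by omega : z ≠ n), Function.update_self] at h2
        rw [Function.update_self] at h1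
        rw [h2, h1, hρ]
      · intro h
        refine ⟨a.eval sg ρ, ?_, ?_⟩
        · rw [ih n (n + 1) hv (by omega) _]
          rw [Function.update_self]
          exact (FSTerm.eval_congr sg (fun v hvmem => by
            rw [Function.update_of_ne]
            exact fun hc => absurd (hvars v hvmem) (by omega))).symm
        · rw [Function.update_of_ne (by omega : z ≠ n), Function.update_self, h]
  | add a b iha ihb =>
      intro z n hvars hz ρ
      have hva : ∀ v ∈ a.vars, v < n + 2 := fun v hv => by
        have := hvars v (Or.inl hv); omega
      have hvb : ∀ v ∈ b.vars, v < n + 2 := fun v hv => by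
        have := hvars v (Or.inr hv); omega
      simp only [fsTrans, OForm.holds, OTerm.eval, FSTerm.eval]
      constructor
      · rintro ⟨w1, w2, h1, h2, h3⟩
        set ρ' := Function.update (Function.update ρ n w1) (n + 1) w2 with hρ'
        rw [iha n (n + 2) hva (by omega) _] at h1
        rw [ihb (n + 1) (n + 2) hvb (by omega) _] at h2
        have e1 : ρ' n = w1 := by
          rw [hρ', Function.update_of_ne (by omega : n ≠ n + 1),
            Function.update_self]
        have e2 : ρ' (n + 1) = w2 := by rw [hρ', Function.update_self]
        have ez : ρ' z = ρ z := by
          rw [hρ', Function.update_of_ne (by omega : z ≠ n + 1),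
            Function.update_of_ne (by omega : z ≠ n)]
        have ea : a.eval sg ρ' = a.eval sg ρ :=
          FSTerm.eval_congr sg (fun v hvmem => by
            have := hvars v (Or.inl hvmem)
            rw [hρ', Function.update_of_ne (by omega : v ≠ n + 1),
              Function.update_of_ne (by omega : v ≠ n)])
        have eb : b.eval sg ρ' = b.eval sg ρ :=
          FSTerm.eval_congr sg (fun v hvmem => by
            have := hvars v (Or.inr hvmem)
            rw [hρ', Function.update_of_ne (by omega : v ≠ n + 1),
              Function.update_of_ne (by omega : v ≠ n)])
        rw [e1, ea] at h1
        rw [e2, eb] at h2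
        rw [ez, e1, e2] at h3
        rw [h3, h1, h2]
      · intro h
        refine ⟨a.eval sg ρ, b.eval sg ρ, ?_, ?_, ?_⟩
        all_goals
          set ρ' := Function.update (Function.update ρ n (a.eval sg ρ)) (n + 1)
            (b.eval sg ρ) with hρ'
        · rw [iha n (n + 2) hva (by omega) _]
          have e1 : ρ' n = a.eval sg ρ := by
            rw [hρ', Function.update_of_ne (by omega : n ≠ n + 1),
              Function.update_self]
          rw [e1]
          exact (FSTerm.eval_congr sg (fun v hvmem => by
            have := hvars v (Or.inl hvmem)
            rw [hρ', Function.update_of_ne (by omega : v ≠ n + 1),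
              Function.update_of_ne (by omega : v ≠ n)])).symm
        · rw [ihb (n + 1) (n + 2) hvb (by omega) _]
          have e2 : ρ' (n + 1) = b.eval sg ρ := by
            rw [hρ', Function.update_self]
          rw [e2]
          exact (FSTerm.eval_congr sg (fun v hvmem => by
            have := hvars v (Or.inr hvmem)
            rw [hρ', Function.update_of_ne (by omega : v ≠ n + 1),
              Function.update_of_ne (by omega : v ≠ n)])).symm
        · have e1 : ρ' n = a.eval sg ρ := by
            rw [hρ', Function.update_of_ne (by omega : n ≠ n + 1),
              Function.update_self]
          have e2 : ρ' (n + 1) = b.eval sg ρ := by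
            rw [hρ', Function.update_self]
          have ez : ρ' z = ρ z := by
            rw [hρ', Function.update_of_ne (by omega : z ≠ n + 1),
              Function.update_of_ne (by omega : z ≠ n)]
          rw [e1, e2, ez, h]
  | mul a b iha ihb =>
      intro z n hvars hz ρ
      have hva : ∀ v ∈ a.vars, v < n + 2 := fun v hv => by
        have := hvars v (Or.inl hv); omega
      have hvb : ∀ v ∈ b.vars, v < n + 2 := fun v hv => by
        have := hvars v (Or.inr hv); omega
      simp only [fsTrans, OForm.holds, OTerm.eval, FSTerm.eval]
      constructor
      · rintro ⟨w1, w2, h1, h2, h3⟩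
        set ρ' := Function.update (Function.update ρ n w1) (n + 1) w2 with hρ'
        rw [iha n (n + 2) hva (by omega) _] at h1
        rw [ihb (n + 1) (n + 2) hvb (by omega) _] at h2
        have e1 : ρ' n = w1 := by
          rw [hρ', Function.update_of_ne (by omega : n ≠ n + 1),
            Function.update_self]
        have e2 : ρ' (n + 1) = w2 := by rw [hρ', Function.update_self]
        have ez : ρ' z = ρ z := by
          rw [hρ', Function.update_of_ne (by omega : z ≠ n + 1),
            Function.update_of_ne (by omega : z ≠ n)]
        have ea : a.eval sg ρ' = a.eval sg ρ :=
          FSTerm.eval_congr sg (fun v hvmem => by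
            have := hvars v (Or.inl hvmem)
            rw [hρ', Function.update_of_ne (by omega : v ≠ n + 1),
              Function.update_of_ne (by omega : v ≠ n)])
        have eb : b.eval sg ρ' = b.eval sg ρ :=
          FSTerm.eval_congr sg (fun v hvmem => by
            have := hvars v (Or.inr hvmem)
            rw [hρ', Function.update_of_ne (by omega : v ≠ n + 1),
              Function.update_of_ne (by omega : v ≠ n)])
        rw [e1, ea] at h1
        rw [e2, eb] at h2
        rw [ez, e1, e2] at h3
        rw [h3, h1, h2]
      · intro h
        refine ⟨a.eval sg ρ, b.eval sg ρ, ?_, ?_, ?_⟩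
        all_goals
          set ρ' := Function.update (Function.update ρ n (a.eval sg ρ)) (n + 1)
            (b.eval sg ρ) with hρ'
        · rw [iha n (n + 2) hva (by omega) _]
          have e1 : ρ' n = a.eval sg ρ := by
            rw [hρ', Function.update_of_ne (by omega : n ≠ n + 1),
              Function.update_self]
          rw [e1]
          exact (FSTerm.eval_congr sg (fun v hvmem => by
            have := hvars v (Or.inl hvmem)
            rw [hρ', Function.update_of_ne (by omega : v ≠ n + 1),
              Function.update_of_ne (by omega : v ≠ n)])).symm
        · rw [ihb (n + 1) (n + 2) hvb (by omega) _]
          have e2 : ρ' (n + 1) = b.eval sg ρ := by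
            rw [hρ', Function.update_self]
          rw [e2]
          exact (FSTerm.eval_congr sg (fun v hvmem => by
            have := hvars v (Or.inr hvmem)
            rw [hρ', Function.update_of_ne (by omega : v ≠ n + 1),
              Function.update_of_ne (by omega : v ≠ n)])).symm
        · have e1 : ρ' n = a.eval sg ρ := by
            rw [hρ', Function.update_of_ne (by omega : n ≠ n + 1),
              Function.update_self]
          have e2 : ρ' (n + 1) = b.eval sg ρ := by
            rw [hρ', Function.update_self]
          have ez : ρ' z = ρ z := by
            rw [hρ', Function.update_of_ne (by omega : z ≠ n + 1),
              Function.update_of_ne (by omega : z ≠ n)]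
          rw [e1, e2, ez, h]
  | sgn a ih =>
      intro z n hvars hz ρ
      have hv : ∀ v ∈ a.vars, v < n + 1 := fun v hv => by
        have := hvars v hv; omega
      simp only [fsTrans, OForm.holds, OTerm.eval, FSTerm.eval]
      constructor
      · rintro ⟨w, h1, h2⟩
        set ρ' := Function.update ρ n w with hρ'
        rw [ih n (n + 1) hv (by omega) _] at h1
        have e1 : ρ' n = w := Function.update_self _ _ _
        have ez : ρ' z = ρ z :=
          Function.update_of_ne (by omega : z ≠ n) _ _
        have ea : a.eval sg ρ' = a.eval sg ρ :=
          FSTerm.eval_congr sg (fun v hvmem => by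
            rw [hρ', Function.update_of_ne]
            exact fun hc => absurd (hvars v hvmem) (by omega))
        rw [e1, ea] at h1
        -- h1 : w = a.eval sg ρ
        rcases h2 with ⟨hw0, hz0⟩ | (⟨hwp, hz1⟩ | ⟨hwn, hzm⟩)
        · rw [e1] at hw0; rw [ez] at hz0
          rw [hz0, ← h1, hw0, sg_zero hs]
        · rw [e1] at hwp; rw [ez] at hz1
          rw [sub_zero, h1] at hwp
          rw [hz1]; exact hwp.symm
        · rw [e1] at hwn; rw [ez] at hzm
          rw [zero_sub, sg_neg hs, h1] at hwn
          rw [hzm]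
          linear_combination hwn
      · intro h
        refine ⟨a.eval sg ρ, ?_, ?_⟩
        · rw [ih n (n + 1) hv (by omega) _, Function.update_self]
          exact (FSTerm.eval_congr sg (fun v hvmem => by
            rw [Function.update_of_ne]
            exact fun hc => absurd (hvars v hvmem) (by omega))).symm
        · set w := a.eval sg ρ with hw
          have e1 : Function.update ρ n w n = w := Function.update_self _ _ _
          have ez : Function.update ρ n w z = ρ z :=
            Function.update_of_ne (by omega : z ≠ n) _ _
          by_cases hw0 : w = 0
          · left
            exact ⟨by rw [e1, hw0], by rw [ez, h, hw0, sg_zero hs]⟩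
          · rcases sg_cases hs il hw0 with h1 | hm1
            · right; left
              refine ⟨?_, by rw [ez, h, h1]⟩
              rw [e1, sub_zero]; exact h1
            · right; right
              refine ⟨?_, by rw [ez, h, hm1]⟩
              rw [e1, zero_sub, sg_neg hs, hm1]
              ring

/-- every equation `s = t` between `Σ_fs`-terms has a first-order
representation `ψ(s,t)` over the ordered field signature, with the same free
variables, valid in every signed cancellation meadow with the order
`x < y ↔ s(y − x) = 1`. -/
theorem fsterm_equation_has_ordered_field_representation (s t : FSTerm) :
    ∃ ψ : OForm, ψ.freeVars = s.vars ∪ t.vars ∧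
      ∀ (M : Type) [Meadow M] (sg : M → M), IsSign M sg → InverseLaw M →
        ∀ ρ : ℕ → M,
          (s.eval sg ρ = t.eval sg ρ ↔
            ψ.holds (fun x y => sg (y - x) = 1) ρ) := by
  set N := max s.bnd t.bnd with hN
  have hsv : ∀ v ∈ s.vars, v < N + 1 := fun v hv => by
    have := FSTerm.lt_bnd hv; omega
  have htv : ∀ v ∈ t.vars, v < N + 1 := fun v hv => by
    have := FSTerm.lt_bnd hv; omega
  refine ⟨.ex N (.and (fsTrans s N (N + 1)) (fsTrans t N (N + 1))), ?_, ?_⟩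
  · simp only [OForm.freeVars, trans_freeVars s N (N + 1) hsv (by omega),
      trans_freeVars t N (N + 1) htv (by omega)]
    ext w
    simp only [Set.mem_diff, Set.mem_union, Set.mem_singleton_iff]
    have h1 : w ∈ s.vars → ¬ w = N := fun h hc => by
      subst hc; have := FSTerm.lt_bnd h; omega
    have h2 : w ∈ t.vars → ¬ w = N := fun h hc => by
      subst hc; have := FSTerm.lt_bnd h; omega
    tauto
  · intro M _ sg hs il ρ
    simp only [OForm.holds]
    constructor
    · intro h
      refine ⟨s.eval sg ρ, ?_, ?_⟩
      · rw [trans_holds s sg hs il N (N + 1) hsv (by omega),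
          Function.update_self]
        exact (FSTerm.eval_congr sg (fun v hvmem => by
          rw [Function.update_of_ne]
          exact fun hc => absurd (FSTerm.lt_bnd hvmem) (by omega))).symm
      · rw [trans_holds t sg hs il N (N + 1) htv (by omega),
          Function.update_self, h]
        exact (FSTerm.eval_congr sg (fun v hvmem => by
          rw [Function.update_of_ne]
          exact fun hc => absurd (FSTerm.lt_bnd hvmem) (by omega))).symm
    · rintro ⟨w, h1, h2⟩
      rw [trans_holds s sg hs il N (N + 1) hsv (by omega)] at h1
      rw [trans_holds t sg hs il N (N + 1) htv (by omega)] at h2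
      rw [Function.update_self] at h1 h2
      have es : s.eval sg (Function.update ρ N w) = s.eval sg ρ :=
        FSTerm.eval_congr sg (fun v hvmem => by
          rw [Function.update_of_ne]
          exact fun hc => absurd (FSTerm.lt_bnd hvmem) (by omega))
      have et : t.eval sg (Function.update ρ N w) = t.eval sg ρ :=
        FSTerm.eval_congr sg (fun v hvmem => by
          rw [Function.update_of_ne]
          exact fun hc => absurd (FSTerm.lt_bnd hvmem) (by omega))
      rw [es] at h1; rw [et] at h2
      rw [← h1, ← h2]
end

section
/- Let s and t be terms over the meadow signature Σ_m = (0,1,−,+,·,⁻¹) with free variables among {x₀,…,xₙ, y₀,…,yₙ}, let z₀,…,zₙ be fresh variables, and let s* and t* be obtained from s and t by substituting re(zⱼ) for xⱼ and im(zⱼ) for yⱼ (0 ≤ j ≤ n). If the equation s = t holds in every meadow satisfying all instances of the scheme (AEFR_n): 1_{1+x₀²+⋯+xₙ²} = 1, then the equation s* = t* holds in every model of Md + CC + SSAV. -/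
/-- A complex meadow (model of `Md + CC + SSAV`): a meadow with an imaginary unit
`i` and a conjugation `conj` satisfying the axioms `CC` and the scheme `SSAV`,
where `1_x = x·x⁻¹`. -/
structure IsComplexMeadow (M : Type) [Meadow M] (i : M) (conj : M → M) : Prop where
  cc0 : conj 0 = 0
  cc1 : conj 1 = 1
  cc2 : conj i = -i
  cc3 : ∀ x : M, conj (-x) = -conj x
  cc4 : ∀ x y : M, conj (x + y) = conj x + conj y
  cc5 : ∀ x y : M, conj (x * y) = conj x * conj y
  cc6 : ∀ x : M, conj x⁻¹ = (conj x)⁻¹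
  cc7 : ∀ x : M, conj (conj x) = x
  cc8 : i * i = -1
  cc9 : ∀ x : M, conj x * (conj x)⁻¹ = x * x⁻¹
  ssav : ∀ (n : ℕ) (x : Fin (n + 1) → M),
    (1 + ∑ j, x j * conj (x j)) * (1 + ∑ j, x j * conj (x j))⁻¹ = 1

/-- The real part `re(x) = (1/2)·(x + conj x)` in a complex meadow. -/
def cmRe {M : Type} [Meadow M] (conj : M → M) (x : M) : M :=
  (1 * (2 : M)⁻¹) * (x + conj x)

/-- The imaginary part `im(x) = −(i/2)·(x − conj x)` in a complex meadow. -/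
def cmIm {M : Type} [Meadow M] (i : M) (conj : M → M) (x : M) : M :=
  -(i * (2 : M)⁻¹) * (x - conj x)

/-- Terms over the meadow signature `Σ_m` with variables in `V`. -/
inductive MTermV (V : Type) : Type
  | var : V → MTermV V
  | zero : MTermV V
  | one : MTermV V
  | neg : MTermV V → MTermV V
  | add : MTermV V → MTermV V → MTermV V
  | mul : MTermV V → MTermV V → MTermV V
  | inv : MTermV V → MTermV V

def MTermV.eval {V M : Type} [Zero M] [One M] [Neg M] [Add M] [Mul M] [Inv M]
    (ρ : V → M) : MTermV V → M
  | .var v => ρ v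
  | .zero => 0
  | .one => 1
  | .neg t => -(t.eval ρ)
  | .add s t => s.eval ρ + t.eval ρ
  | .mul s t => s.eval ρ * t.eval ρ
  | .inv t => (t.eval ρ)⁻¹

/-- Terms over the complex meadow signature `(0,1,i,−,+,·,⁻¹,conj)` with
variables in `V`. -/
inductive CTermV (V : Type) : Type
  | var : V → CTermV V
  | zero : CTermV V
  | one : CTermV V
  | iunit : CTermV V
  | neg : CTermV V → CTermV V
  | add : CTermV V → CTermV V → CTermV V
  | mul : CTermV V → CTermV V → CTermV V
  | inv : CTermV V → CTermV V
  | conj : CTermV V → CTermV V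

def CTermV.eval {V M : Type} [Zero M] [One M] [Neg M] [Add M] [Mul M] [Inv M]
    (i : M) (cj : M → M) (ρ : V → M) : CTermV V → M
  | .var v => ρ v
  | .zero => 0
  | .one => 1
  | .iunit => i
  | .neg t => -(t.eval i cj ρ)
  | .add s t => s.eval i cj ρ + t.eval i cj ρ
  | .mul s t => s.eval i cj ρ * t.eval i cj ρ
  | .inv t => (t.eval i cj ρ)⁻¹
  | .conj t => cj (t.eval i cj ρ)

/-- Interpret a meadow term as a complex meadow term, substituting the complex
meadow term `f v` for each variable `v`. -/
def MTermV.subst {V W : Type} (f : V → CTermV W) : MTermV V → CTermV W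
  | .var v => f v
  | .zero => .zero
  | .one => .one
  | .neg t => .neg (t.subst f)
  | .add s t => .add (s.subst f) (t.subst f)
  | .mul s t => .mul (s.subst f) (t.subst f)
  | .inv t => .inv (t.subst f)

/-- The term `re(c) = (1/2)·(c + conj c)`. -/
def reTerm {W : Type} (c : CTermV W) : CTermV W :=
  .mul (.mul .one (.inv (.add .one .one))) (.add c (.conj c))

/-- The term `im(c) = −(i/2)·(c − conj c)`. -/
def imTerm {W : Type} (c : CTermV W) : CTermV W :=
  .mul (.neg (.mul .iunit (.inv (.add .one .one)))) (.add c (.neg (.conj c)))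

/-- The substitution sending `xⱼ ↦ re(zⱼ)` and `yⱼ ↦ im(zⱼ)`. -/
def reImSubst (n : ℕ) : (Fin (n + 1) ⊕ Fin (n + 1)) → CTermV (Fin (n + 1))
  | .inl j => reTerm (.var j)
  | .inr j => imTerm (.var j)

section Aux

variable {M : Type} [Meadow M] {i : M} {cj : M → M}

/-- The subring of conjugation-fixed elements. -/
def fixedSubring (h : IsComplexMeadow M i cj) : Subring M where
  carrier := {x | cj x = x}
  one_mem' := h.cc1
  zero_mem' := h.cc0
  add_mem' := by intro a b ha hb; simp only [Set.mem_setOf_eq] at *; rw [h.cc4, ha, hb]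
  mul_mem' := by intro a b ha hb; simp only [Set.mem_setOf_eq] at *; rw [h.cc5, ha, hb]
  neg_mem' := by intro a ha; simp only [Set.mem_setOf_eq] at *; rw [h.cc3, ha]

instance fixedInv (h : IsComplexMeadow M i cj) : Inv (fixedSubring h) :=
  ⟨fun x => ⟨(x : M)⁻¹, by
    have hx : cj (x : M) = x := x.2
    show cj ((x : M)⁻¹) = (x : M)⁻¹
    rw [h.cc6, hx]⟩⟩

def fixedMeadow (h : IsComplexMeadow M i cj) : Meadow (fixedSubring h) :=
  { (inferInstance : CommRing (fixedSubring h)), fixedInv h with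
    minv_inv := by
      intro x
      apply Subtype.ext
      exact Meadow.minv_inv (x : M)
    ril := by
      intro x
      apply Subtype.ext
      exact Meadow.ril (x : M) }

lemma fixed_coe_inv (h : IsComplexMeadow M i cj) (x : fixedSubring h) :
    letI := fixedMeadow h
    ((x⁻¹ : fixedSubring h) : M) = (x : M)⁻¹ := rfl

lemma fixed_aefr (h : IsComplexMeadow M i cj) :
    letI := fixedMeadow h
    AEFR (fixedSubring h) := by
  letI := fixedMeadow h
  intro m x
  apply Subtype.ext
  push_cast
  show ((1 + ∑ j, x j ^ 2 : fixedSubring h) : M) * ((1 + ∑ j, x j ^ 2 : fixedSubring h) : M)⁻¹ = 1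
  push_cast
  have key : ((1 : M) + ∑ j, (x j : M) ^ 2) = 1 + ∑ j, (x j : M) * cj (x j : M) := by
    congr 1
    refine Finset.sum_congr rfl fun j _ => ?_
    rw [(x j).2, sq]
  rw [key]
  exact h.ssav m fun j => (x j : M)

lemma eval_coe (h : IsComplexMeadow M i cj) {V : Type} (ρ : V → fixedSubring h)
    (u : MTermV V) :
    letI := fixedMeadow h
    ((u.eval ρ : fixedSubring h) : M) = u.eval (fun v => ((ρ v : M))) := by
  letI := fixedMeadow h
  induction u with
  | var v => rfl
  | zero => exact Subring.coe_zero _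
  | one => exact Subring.coe_one _
  | neg t ih => show ((-(t.eval ρ) : fixedSubring h) : M) = _; push_cast [ih]; rfl
  | add s t ihs iht => show ((s.eval ρ + t.eval ρ : fixedSubring h) : M) = _; push_cast [ihs, iht]; rfl
  | mul s t ihs iht => show ((s.eval ρ * t.eval ρ : fixedSubring h) : M) = _; push_cast [ihs, iht]; rfl
  | inv t ih => show (((t.eval ρ)⁻¹ : fixedSubring h) : M) = _; rw [fixed_coe_inv, ih]; rfl

lemma subst_eval {V W : Type} (f : V → CTermV W) (u : MTermV V)
    (ρ : W → M) :
    (u.subst f).eval i cj ρ = u.eval (fun v => (f v).eval i cj ρ) := by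
  induction u with
  | var v => rfl
  | zero => rfl
  | one => rfl
  | neg t ih => simp [MTermV.subst, MTermV.eval, CTermV.eval, ih]
  | add s t ihs iht => simp [MTermV.subst, MTermV.eval, CTermV.eval, ihs, iht]
  | mul s t ihs iht => simp [MTermV.subst, MTermV.eval, CTermV.eval, ihs, iht]
  | inv t ih => simp [MTermV.subst, MTermV.eval, CTermV.eval, ih]

lemma re_mem (h : IsComplexMeadow M i cj) (ρ : M) :
    (reTerm (CTermV.var ρ)).eval i cj id ∈ fixedSubring h := by
  show cj _ = _
  simp only [reTerm, CTermV.eval, id]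
  rw [h.cc5, h.cc5, h.cc1, h.cc6, h.cc4, h.cc1, h.cc4, h.cc7]
  ring

lemma im_mem (h : IsComplexMeadow M i cj) (ρ : M) :
    (imTerm (CTermV.var ρ)).eval i cj id ∈ fixedSubring h := by
  show cj _ = _
  simp only [imTerm, CTermV.eval, id]
  rw [h.cc5, h.cc3, h.cc5, h.cc2, h.cc6, h.cc4, h.cc1, h.cc4, h.cc3, h.cc7]
  ring

end Aux

/-- if `s = t` (with variables among `x₀,…,xₙ,y₀,…,yₙ`) holds in
every meadow satisfying `AEFR`, then `s* = t*`, obtained by substituting `re(zⱼ)`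
for `xⱼ` and `im(zⱼ)` for `yⱼ`, holds in every model of `Md + CC + SSAV`. -/
theorem aefr_eq_transfers_to_complexMeadow (n : ℕ)
    (s t : MTermV (Fin (n + 1) ⊕ Fin (n + 1)))
    (h : ∀ (M : Type) [Meadow M], AEFR M →
      ∀ ρ : Fin (n + 1) ⊕ Fin (n + 1) → M, s.eval ρ = t.eval ρ) :
    ∀ (M : Type) [Meadow M] (i : M) (cj : M → M), IsComplexMeadow M i cj →
      ∀ ρ : Fin (n + 1) → M,
        (s.subst (reImSubst n)).eval i cj ρ = (t.subst (reImSubst n)).eval i cj ρ := by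
  intro M _ i cj hc ρ
  letI := fixedMeadow hc
  set ρ' : Fin (n + 1) ⊕ Fin (n + 1) → fixedSubring hc := fun v =>
    match v with
    | .inl j => ⟨(reTerm (CTermV.var (ρ j))).eval i cj id, re_mem hc (ρ j)⟩
    | .inr j => ⟨(imTerm (CTermV.var (ρ j))).eval i cj id, im_mem hc (ρ j)⟩
    with hρ'
  have key : ∀ v, (reImSubst n v).eval i cj ρ = ((ρ' v : fixedSubring hc) : M) := by
    rintro (j | j) <;> simp [hρ', reImSubst, reTerm, imTerm, CTermV.eval]
  have := h (fixedSubring hc) (fixed_aefr hc) ρ'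
  rw [subst_eval, subst_eval]
  calc s.eval (fun v => (reImSubst n v).eval i cj ρ)
      = s.eval (fun v => ((ρ' v : fixedSubring hc) : M)) := by simp only [key]
    _ = ((s.eval ρ' : fixedSubring hc) : M) := (eval_coe hc ρ' s).symm
    _ = ((t.eval ρ' : fixedSubring hc) : M) := by exact congrArg Subtype.val this
    _ = t.eval (fun v => ((ρ' v : fixedSubring hc) : M)) := eval_coe hc ρ' t
    _ = t.eval (fun v => (reImSubst n v).eval i cj ρ) := by simp only [key]
end

section
/- In every signed meadow, for every n and all elements x₀, …, xₙ: 0_{x₀²+⋯+xₙ²}·1_{x₀·⋯·xₙ} = 0, i.e., (1 − (x₀²+⋯+xₙ²)·(x₀²+⋯+xₙ²)⁻¹)·((x₀·⋯·xₙ)·(x₀·⋯·xₙ)⁻¹) = 0. -/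
namespace MeadowAux

variable {M : Type} [Meadow M]

lemma hu1 (x : M) : x * x⁻¹ * x = x := by
  have h := Meadow.ril x; linear_combination h

lemma hu2 (x : M) : x⁻¹ * x * x⁻¹ = x⁻¹ := by
  have h := Meadow.ril x⁻¹
  rw [Meadow.minv_inv] at h
  linear_combination h

/-- Uniqueness of the von Neumann pseudo-inverse in a commutative ring. -/
lemma inv_unique (x y : M) (h1 : x * y * x = x) (h2 : y * x * y = y) : x⁻¹ = y := by
  have key : x * x⁻¹ = x * y := by
    have a1 : x * x⁻¹ * (x * y) = x * y := by
      calc x * x⁻¹ * (x * y) = (x * x⁻¹ * x) * y := by ring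
        _ = x * y := by rw [hu1]
    have a2 : x * x⁻¹ * (x * y) = x * x⁻¹ := by
      calc x * x⁻¹ * (x * y) = (x * y * x) * x⁻¹ := by ring
        _ = x * x⁻¹ := by rw [h1]
    rw [a2] at a1; exact a1
  have b1 : x⁻¹ = x * x⁻¹ * y := by
    calc x⁻¹ = x⁻¹ * (x * x⁻¹) := by linear_combination (-1 : M) * hu2 x
      _ = x⁻¹ * (x * y) := by rw [key]
      _ = x * x⁻¹ * y := by ring
  have b2 : y = x * x⁻¹ * y := by
    calc y = y * (x * y) := by linear_combination (-1 : M) * h2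
      _ = y * (x * x⁻¹) := by rw [← key]
      _ = x * x⁻¹ * y := by ring
  rw [b1, ← b2]

lemma inv_zero' : (0 : M)⁻¹ = 0 := inv_unique 0 0 (by ring) (by ring)

lemma inv_mul (a b : M) : (a * b)⁻¹ = a⁻¹ * b⁻¹ := by
  apply inv_unique
  · linear_combination (b * (b * b⁻¹)) * Meadow.ril a + a * Meadow.ril b
  · linear_combination (b⁻¹ * (b * b⁻¹)) * hu2 a + a⁻¹ * hu2 b

lemma e_idem (x : M) : (x * x⁻¹) * (x * x⁻¹) = x * x⁻¹ := by
  linear_combination x⁻¹ * Meadow.ril x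

lemma sq_e (x : M) : x ^ 2 * (x ^ 2)⁻¹ = x * x⁻¹ := by
  have h : (x ^ 2 : M) = x * x := sq x
  rw [h, inv_mul]
  linear_combination e_idem x

lemma sq_absorb (x : M) : x ^ 2 * (x * x⁻¹) = x ^ 2 := by
  have h := Meadow.ril x
  linear_combination x * h

variable {sg : M → M}

lemma s_sq (hs : IsSign M sg) (x : M) : sg x * sg x = x * x⁻¹ := by
  have h1 := hs.s1 x
  rw [hs.s5, hs.s4] at h1
  exact h1

lemma s_zero (hs : IsSign M sg) : sg 0 = 0 := by
  have h := hs.s1 0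
  rw [inv_zero'] at h
  simpa using h

lemma s_sqval (hs : IsSign M sg) (x : M) : sg (x ^ 2) = x * x⁻¹ := by
  have h : (x ^ 2 : M) = x * x := sq x
  rw [h, hs.s5]
  exact s_sq hs x

/-- Key lemma: if `sg y = 1_y` then `sg (x² + y) = 1_{x²+y}` and
`0_{x²+y} = 0_x · 0_y`. -/
lemma key (hs : IsSign M sg) (x y : M) (hy : sg y = y * y⁻¹) :
    sg (x ^ 2 + y) = (x ^ 2 + y) * (x ^ 2 + y)⁻¹ ∧
    1 - (x ^ 2 + y) * (x ^ 2 + y)⁻¹ = (1 - x * x⁻¹) * (1 - y * y⁻¹) := by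
  set a := x * x⁻¹ with ha
  set b := y * y⁻¹ with hb
  set t := sg (x ^ 2 + y) with ht
  have ea : a * a = a := e_idem x
  have eb : b * b = b := e_idem y
  -- F1 : t * (1-b) = a * (1-b)
  have hmul1 : (x ^ 2 + y) * (1 - b) = x ^ 2 * (1 - b) := by
    rw [hb]; linear_combination (-1 : M) * Meadow.ril y
  have F1 : t * (1 - b) = a * (1 - b) := by
    have h1 : sg ((x ^ 2 + y) * (1 - b)) = t * (1 - b) := by
      rw [hs.s5, ht, hb, hs.s2]
    have h2 : sg (x ^ 2 * (1 - b)) = a * (1 - b) := by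
      rw [hs.s5, hb, hs.s2, ← hb, s_sqval hs, ← ha]
    rw [← h1, hmul1, h2]
  -- F2 : t * (1-a) = b * (1-a)
  have hmul2 : (x ^ 2 + y) * (1 - a) = y * (1 - a) := by
    rw [ha]; linear_combination (-1 : M) * sq_absorb x
  have F2 : t * (1 - a) = b * (1 - a) := by
    have h1 : sg ((x ^ 2 + y) * (1 - a)) = t * (1 - a) := by
      rw [hs.s5, ht, ha, hs.s2]
    have h2 : sg (y * (1 - a)) = b * (1 - a) := by
      rw [hs.s5, ha, hs.s2, hy]
    rw [← h1, hmul2, h2]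
  -- F3 : t * (a*b) = a*b
  have h6 := hs.s6 (x ^ 2) y
  rw [s_sqval hs, hy, ← ha, ← ht] at h6
  have hd : (a - b) * (a * b) = 0 := by linear_combination b * ea - a * eb
  have hdd : (a - b) * (a - b)⁻¹ * (a * b) = 0 := by
    have h : (a - b)⁻¹ * ((a - b) * (a * b)) = 0 := by rw [hd]; ring
    linear_combination h
  have h7 : (t - a) * (a * b) = 0 := by
    linear_combination (a * b) * h6 + (t - a) * hdd
  have F3 : t * (a * b) = a * b := by linear_combination h7 + b * ea
  -- combine
  have htv : t = a + b - a * b := by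
    linear_combination F1 + b * F2 + F3 + (1 - a) * eb
  have hone : (x ^ 2 + y) * (x ^ 2 + y)⁻¹ = a + b - a * b := by
    have h := s_sq hs (x ^ 2 + y)
    rw [← ht, htv] at h
    linear_combination (-1 : M) * h + (1 - b) * (1 - b) * ea + (1 - a) * eb
  constructor
  · rw [htv, hone]
  · rw [hone]; ring

/-- Inductive lemma: for a sum of squares `S`, `sg S = 1_S` and `0_S = ∏ 0_{xᵢ}`. -/
lemma sum_lemma (hs : IsSign M sg) : ∀ (n : ℕ) (x : Fin (n + 1) → M),
    sg (∑ i, x i ^ 2) = (∑ i, x i ^ 2) * (∑ i, x i ^ 2)⁻¹ ∧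
    1 - (∑ i, x i ^ 2) * (∑ i, x i ^ 2)⁻¹ = ∏ i, (1 - x i * (x i)⁻¹) := by
  intro n
  induction n with
  | zero =>
      intro x
      have h0 : sg (0 : M) = (0 : M) * (0 : M)⁻¹ := by
        rw [s_zero hs, inv_zero', mul_zero]
      have hk := key hs (x 0) 0 h0
      simp only [add_zero] at hk
      have hs1 : (∑ i, x i ^ 2) = x 0 ^ 2 := by simp
      have hp1 : (∏ i, (1 - x i * (x i)⁻¹)) = 1 - x 0 * (x 0)⁻¹ := by simp
      rw [hs1, hp1]
      refine ⟨hk.1, ?_⟩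
      rw [hk.2, inv_zero', mul_zero]
      ring
  | succ m ih =>
      intro x
      have hsum : (∑ i, x i ^ 2) = x 0 ^ 2 + ∑ i : Fin (m + 1), x i.succ ^ 2 := by
        rw [Fin.sum_univ_succ]
      have hprod : (∏ i, (1 - x i * (x i)⁻¹)) =
          (1 - x 0 * (x 0)⁻¹) * ∏ i : Fin (m + 1), (1 - x i.succ * (x i.succ)⁻¹) := by
        rw [Fin.prod_univ_succ]
      obtain ⟨ih1, ih2⟩ := ih (fun i => x i.succ)
      have hk := key hs (x 0) (∑ i : Fin (m + 1), x i.succ ^ 2) ih1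
      rw [hsum, hprod]
      exact ⟨hk.1, by rw [hk.2, ← ih2]⟩

/-- `1_{∏ xᵢ} = ∏ 1_{xᵢ}`. -/
lemma prod_e : ∀ (n : ℕ) (x : Fin (n + 1) → M),
    (∏ i, x i) * (∏ i, x i)⁻¹ = ∏ i, (x i * (x i)⁻¹) := by
  intro n
  induction n with
  | zero => intro x; simp
  | succ m ih =>
      intro x
      rw [Fin.prod_univ_succ x, Fin.prod_univ_succ (fun i => x i * (x i)⁻¹), inv_mul,
        ← ih (fun i => x i.succ)]
      ring

end MeadowAux

/-- in every signed meadow, `0_{x₀²+⋯+xₙ²} · 1_{x₀·⋯·xₙ} = 0`. -/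
theorem signedMeadow_pseudoZero_sumSq_mul_pseudoOne_prod (M : Type) [Meadow M]
    (sg : M → M) (hs : IsSign M sg) (n : ℕ) (x : Fin (n + 1) → M) :
    (1 - (∑ i, x i ^ 2) * (∑ i, x i ^ 2)⁻¹) * ((∏ i, x i) * (∏ i, x i)⁻¹) = 0 := by
  rw [(MeadowAux.sum_lemma hs n x).2, MeadowAux.prod_e n x, ← Finset.prod_mul_distrib]
  apply Finset.prod_eq_zero (Finset.mem_univ (0 : Fin (n + 1)))
  linear_combination - MeadowAux.e_idem (x 0)
end
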